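/- For every u ∈ 𝒟 with u⁺ ≠ 0 and u⁻ ≠ 0 there exists a unique pair of reals (s0, t0) with s0 > 0 and t0 > 0 such that s0·u⁺ + t0·u⁻ ∈ ℳ, i.e. ⟨I'(s0·u⁺ + t0·u⁻), s0·u⁺⟩ = 0 and ⟨I'(s0·u⁺ + t0·u⁻), t0·u⁻⟩ = 0. -/

import Mathlib

noncomputable section

open Real Filter Set

namespace DPLap

/-- Forward difference operator. -/
def dlt (u : ℤ → ℝ) (n : ℤ) : ℝ := u (n + 1) - u n

/-- Positive part `u⁺`. -/
def pos (u : ℤ → ℝ) : ℤ → ℝ := fun n => max (u n) 0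

/-- Negative part `u⁻`. -/
def neg (u : ℤ → ℝ) : ℤ → ℝ := fun n => min (u n) 0

/-- Summand of the `E`-norm. -/
def nsum (a b : ℤ → ℝ) (p : ℕ) (u : ℤ → ℝ) (n : ℤ) : ℝ :=
  a n * |dlt u n| ^ p + b n * |u n| ^ p

/-- Membership in the space `E`. -/
def memE (a b : ℤ → ℝ) (p : ℕ) (u : ℤ → ℝ) : Prop :=
  Summable (nsum a b p u)

/-- The norm `‖u‖ = (∑ [a|Δu|^p + b|u|^p])^(1/p)`. -/
def dnorm (a b : ℤ → ℝ) (p : ℕ) (u : ℤ → ℝ) : ℝ :=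
  (∑' n : ℤ, nsum a b p u n) ^ ((p : ℝ)⁻¹)

/-- Summand `c(n)|u(n)|^q ln(|u(n)|^r)` of the logarithmic term (with the
convention `0^q ln 0 = 0`, automatic from `Real.rpow` and `Real.log`). -/
def logSummand (c : ℤ → ℝ) (q r : ℝ) (u : ℤ → ℝ) (n : ℤ) : ℝ :=
  c n * |u n| ^ q * Real.log (|u n| ^ r)

/-- Membership in `𝒟`. -/
def memD (a b c : ℤ → ℝ) (p : ℕ) (q r : ℝ) (u : ℤ → ℝ) : Prop :=
  memE a b p u ∧ Summable (logSummand c q r u)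

/-- The energy functional `I`. -/
def En (a b c : ℤ → ℝ) (p : ℕ) (q r : ℝ) (u : ℤ → ℝ) : ℝ :=
  (1 / (p : ℝ)) * dnorm a b p u ^ p
    + (r / q ^ 2) * ∑' n : ℤ, c n * |u n| ^ q
    - (1 / q) * ∑' n : ℤ, logSummand c q r u n

/-- The pairing `⟨I'(u), v⟩`. -/
def pr (a b c : ℤ → ℝ) (p : ℕ) (q r : ℝ) (u v : ℤ → ℝ) : ℝ :=
  (∑' n : ℤ, (a n * |dlt u n| ^ (p - 2) * dlt u n * dlt v n
      + b n * |u n| ^ (p - 2) * u n * v n))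
    - ∑' n : ℤ, c n * |u n| ^ (q - 2) * u n * v n * Real.log (|u n| ^ r)

/-- The Nehari set `𝒩`. -/
def Nset (a b c : ℤ → ℝ) (p : ℕ) (q r : ℝ) : Set (ℤ → ℝ) :=
  {u | memD a b c p q r u ∧ u ≠ 0 ∧ pr a b c p q r u u = 0}

/-- The sign-changing Nehari set `ℳ`. -/
def Mset (a b c : ℤ → ℝ) (p : ℕ) (q r : ℝ) : Set (ℤ → ℝ) :=
  {u | memD a b c p q r u ∧ pos u ≠ 0 ∧ neg u ≠ 0 ∧
      pr a b c p q r u (pos u) = 0 ∧ pr a b c p q r u (neg u) = 0}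

/-- `m* = inf_ℳ I`. -/
def mStar (a b c : ℤ → ℝ) (p : ℕ) (q r : ℝ) : ℝ :=
  sInf (En a b c p q r '' Mset a b c p q r)

/-- `c* = inf_𝒩 I`. -/
def cStar (a b c : ℤ → ℝ) (p : ℕ) (q r : ℝ) : ℝ :=
  sInf (En a b c p q r '' Nset a b c p q r)

section SignLemmas

variable (u : ℤ → ℝ)

lemma pos_nonneg (n : ℤ) : 0 ≤ pos u n := le_max_right _ _
lemma neg_nonpos (n : ℤ) : neg u n ≤ 0 := min_le_right _ _
lemma pos_add_neg (n : ℤ) : pos u n + neg u n = u n := by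
  have := max_add_min (u n) 0
  simpa [pos, neg] using this
lemma pos_le_abs (n : ℤ) : pos u n ≤ |u n| := by
  apply max_le (le_abs_self _) (abs_nonneg _)
lemma neg_abs_le' (n : ℤ) : |neg u n| ≤ |u n| := by
  rcases le_total (u n) 0 with h | h
  · rw [show neg u n = u n from min_eq_left h]
  · rw [show neg u n = 0 from min_eq_right h]
    simp [abs_nonneg]
lemma pos_abs_le (n : ℤ) : |pos u n| ≤ |u n| := by
  rw [abs_of_nonneg (pos_nonneg u n)]
  exact pos_le_abs u n

/-- `Δu⁺` and `Δu⁻` have the same sign (that of `Δu`). -/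
lemma dlt_sign (n : ℤ) :
    (0 ≤ dlt (pos u) n ∧ 0 ≤ dlt (neg u) n) ∨ (dlt (pos u) n ≤ 0 ∧ dlt (neg u) n ≤ 0) := by
  rcases le_total (u n) (u (n+1)) with h | h
  · left
    constructor
    · simp only [dlt, pos, sub_nonneg]
      exact max_le_max h le_rfl
    · simp only [dlt, neg, sub_nonneg]
      exact min_le_min h le_rfl
  · right
    constructor
    · simp only [dlt, pos, sub_nonpos]
      exact max_le_max h le_rfl
    · simp only [dlt, neg, sub_nonpos]
      exact min_le_min h le_rfl

lemma abs_dlt_pos_le (n : ℤ) : |dlt (pos u) n| ≤ |dlt u n| := by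
  simpa [dlt, pos] using abs_max_sub_max_le_abs (u (n+1)) (u n) 0

lemma abs_dlt_neg_le (n : ℤ) : |dlt (neg u) n| ≤ |dlt u n| := by
  simp only [dlt, neg]
  have h1 := le_abs_self (u (n+1) - u n)
  have h2 := neg_abs_le (u (n+1) - u n)
  rcases le_total (u (n+1)) 0 with ha | ha <;> rcases le_total (u n) 0 with hb | hb <;>
    rw [abs_le] <;> constructor <;>
    simp [min_eq_left, min_eq_right, ha, hb] <;> linarith

/-- nonnegativity of the mixed powers, `p` even -/
lemma XYpow_nonneg {p : ℕ} (hpe : Even p) (i j : ℕ) (hij : i + j = p) (n : ℤ) :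
    0 ≤ dlt (pos u) n ^ i * dlt (neg u) n ^ j := by
  rcases dlt_sign u n with ⟨hX, hY⟩ | ⟨hX, hY⟩
  · positivity
  · rcases Nat.even_or_odd i with hi | hi
    · have hj : Even j := by
        rcases Nat.even_or_odd j with h | h
        · exact h
        · exfalso
          have : Odd (i + j) := hi.add_odd h
          rw [hij] at this
          exact (Nat.not_odd_iff_even.mpr hpe) this
      exact mul_nonneg (hi.pow_nonneg _) (hj.pow_nonneg _)
    · have hj : Odd j := by
        rcases Nat.even_or_odd j with h | h
        · exfalso
          have : Odd (i + j) := by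
            rw [add_comm]; exact h.add_odd hi
          rw [hij] at this
          exact (Nat.not_odd_iff_even.mpr hpe) this
        · exact h
      have h1 : dlt (pos u) n ^ i ≤ 0 := hi.pow_nonpos hX
      have h2 : dlt (neg u) n ^ j ≤ 0 := hj.pow_nonpos hY
      have := mul_nonneg (neg_nonneg.mpr h1) (neg_nonneg.mpr h2)
      nlinarith [this]

lemma abs_XYpow_le {p : ℕ} (i j : ℕ) (hij : i + j = p) (n : ℤ) :
    |dlt (pos u) n ^ i * dlt (neg u) n ^ j| ≤ |dlt u n| ^ p := by
  rw [abs_mul, abs_pow, abs_pow]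
  calc |dlt (pos u) n| ^ i * |dlt (neg u) n| ^ j
      ≤ |dlt u n| ^ i * |dlt u n| ^ j := by
        apply mul_le_mul (pow_le_pow_left₀ (abs_nonneg _) (abs_dlt_pos_le u n) i)
          (pow_le_pow_left₀ (abs_nonneg _) (abs_dlt_neg_le u n) j)
          (by positivity) (by positivity)
    _ = |dlt u n| ^ p := by rw [← pow_add, hij]

end SignLemmas


lemma xqlog_bd {q : ℝ} (hq : 1 ≤ q) {X : ℝ} (hX : 1 ≤ X) :
    ∀ x : ℝ, 0 ≤ x → x ≤ X → x^q * |Real.log x| ≤ X^q * Real.log X + 1 := by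
  intro x hx0 hxX
  have hXq : (0:ℝ) ≤ X^q * Real.log X := by
    have := Real.log_nonneg hX
    positivity
  rcases eq_or_lt_of_le hx0 with h0 | hx0'
  · simp [← h0, Real.zero_rpow (by linarith : q ≠ 0)]
    linarith
  rcases le_or_gt x 1 with hx1 | hx1
  · have hlog : |Real.log x| = Real.log x⁻¹ := by
      rw [Real.log_inv, abs_of_nonpos (Real.log_nonpos hx0 hx1)]
    have hxq : x^q ≤ x := by
      calc x^q ≤ x^(1:ℝ) := Real.rpow_le_rpow_of_exponent_ge hx0' hx1 hq
      _ = x := Real.rpow_one x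
    have hlog2 : Real.log x⁻¹ ≤ x⁻¹ := le_trans (Real.log_le_sub_one_of_pos (by positivity)) (by linarith)
    have hlogpos : 0 ≤ Real.log x⁻¹ := by rw [Real.log_inv]; linarith [Real.log_nonpos hx0 hx1]
    calc x^q * |Real.log x| = x^q * Real.log x⁻¹ := by rw [hlog]
      _ ≤ x * x⁻¹ := by
          apply mul_le_mul hxq hlog2 hlogpos (by linarith)
      _ = 1 := by field_simp
      _ ≤ X^q * Real.log X + 1 := by linarith
  · have hlog : |Real.log x| = Real.log x := abs_of_nonneg (Real.log_nonneg hx1.le)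
    have h1 : x^q ≤ X^q := Real.rpow_le_rpow hx0 hxX (by linarith)
    have h2 : Real.log x ≤ Real.log X := Real.log_le_log hx0' hxX
    calc x^q * |Real.log x| = x^q * Real.log x := by rw [hlog]
      _ ≤ X^q * Real.log X := by
          apply mul_le_mul h1 h2 (Real.log_nonneg hx1.le) (by positivity)
      _ ≤ X^q * Real.log X + 1 := by linarith

lemma rpow_tendsto0 {e : ℝ} (he : 0 < e) :
    Tendsto (fun x : ℝ => x^e) (nhdsWithin 0 (Set.Ioi 0)) (nhds 0) := by
  have h1 : Tendsto (fun x : ℝ => Real.exp (Real.log x * e)) (nhdsWithin 0 (Set.Ioi 0)) (nhds 0) := by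
    apply Real.tendsto_exp_atBot.comp
    apply Tendsto.atBot_mul_const he
    exact Real.tendsto_log_nhdsGT_zero
  apply h1.congr'
  filter_upwards [self_mem_nhdsWithin] with x hx
  rw [Real.rpow_def_of_pos hx]

lemma inner_tendsto0 {e : ℝ} (he : 0 < e) (A0 A1 C : ℝ) :
    Tendsto (fun x : ℝ => x^e * (A0 * Real.log x * C + A1)) (nhdsWithin 0 (Set.Ioi 0)) (nhds 0) := by
  have h1 : Tendsto (fun x : ℝ => (A0*C) * (Real.log x * x^e) + A1 * x^e) (nhdsWithin 0 (Set.Ioi 0)) (nhds 0) := by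
    have := (tendsto_log_mul_rpow_nhdsGT_zero he).const_mul (A0*C)
    have h2 := (rpow_tendsto0 he).const_mul A1
    simpa using this.add h2
  apply h1.congr
  intro x; ring

lemma inner_tendsto_top {e : ℝ} (he : 0 < e) {A0 C : ℝ} (hA0 : 0 < A0) (hC : 0 < C) (A1 : ℝ) :
    Tendsto (fun x : ℝ => x^e * (A0 * Real.log x * C + A1)) atTop atTop := by
  apply Tendsto.atTop_mul_atTop₀ (tendsto_rpow_atTop he)
  have h1 : Tendsto (fun x : ℝ => (A0*C) * Real.log x + A1) atTop atTop :=
    tendsto_atTop_add_const_right _ A1 (tendsto_log_atTop.const_mul_atTop (by positivity))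
  apply h1.congr
  intro x; ring

lemma psi_contOn {q : ℝ} (hq : 0 < q) (A0 A1 C : ℝ) :
    ContinuousOn (fun x : ℝ => x^q * (A0 * Real.log x * C + A1)) (Set.Ici 0) := by
  intro x hx
  rcases eq_or_lt_of_le (show (0:ℝ) ≤ x from hx) with h0 | hx'
  · rw [← h0]
    rw [show Set.Ici (0:ℝ) = insert 0 (Set.Ioi 0) from Set.Ioi_insert.symm]
    rw [continuousWithinAt_insert_self]
    unfold ContinuousWithinAt
    rw [show (fun x : ℝ => x^q * (A0 * Real.log x * C + A1)) 0 = 0 by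
      simp [Real.zero_rpow hq.ne']]
    exact inner_tendsto0 hq A0 A1 C
  · apply ContinuousAt.continuousWithinAt
    apply ContinuousAt.mul
    · exact Real.continuousAt_rpow_const x q (Or.inl hx'.ne')
    · exact ((continuousAt_const.mul (Real.continuousAt_log hx'.ne')).mul continuousAt_const).add continuousAt_const

/-- Global bound and eventual smallness of `h(x) = M x^p - (1/q) x^q (r C log x + A1)`. -/
lemma hfn_props (p : ℕ) (hp : 1 ≤ p) {q : ℝ} (hpq : (p:ℝ) < q) {C : ℝ} (hC : 0 < C)
    {r : ℝ} (hr : 1 ≤ r) (M A1 : ℝ) :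
    ∃ H : ℝ, 0 ≤ H ∧ (∀ x : ℝ, 0 ≤ x → M*x^p - (1/q)*(x^q*(r*Real.log x*C + A1)) ≤ H) ∧
      (∀ V : ℝ, ∃ R : ℝ, 2 ≤ R ∧ ∀ x : ℝ, R ≤ x →
        M*x^p - (1/q)*(x^q*(r*Real.log x*C + A1)) < V) := by
  have hp0 : (0:ℝ) < (p:ℝ) := by exact_mod_cast hp
  have hq : 0 < q := lt_trans hp0 hpq
  have hp1 : (1:ℝ) ≤ (p:ℝ) := by exact_mod_cast hp
  have hq1 : 1 ≤ q := by linarith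
  obtain ⟨R₀, hR₀⟩ := (eventually_atTop).mp
    ((inner_tendsto_top (show (0:ℝ) < q - (p:ℝ) by linarith) (by linarith : (0:ℝ) < r) hC A1).eventually_ge_atTop
      (q*(|M|+1)))
  set R1 : ℝ := max R₀ 1 with hR1def
  have hR1 : 1 ≤ R1 := le_max_right _ _
  have hsplit : ∀ x : ℝ, 0 < x → x^q = x^p * x^(q-(p:ℝ)) := by
    intro x hx
    rw [← Real.rpow_natCast x p, ← Real.rpow_add hx]
    congr 1; ring
  have claimA : ∀ x : ℝ, R1 ≤ x → M*x^p - (1/q)*(x^q*(r*Real.log x*C + A1)) ≤ -x := by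
    intro x hx
    have hx1 : 1 ≤ x := le_trans hR1 hx
    have hx0 : 0 < x := by linarith
    have hin : q*(|M|+1) ≤ x^(q-(p:ℝ)) * (r*Real.log x*C + A1) :=
      hR₀ x (le_trans (le_max_left _ _) hx)
    have hxp : x ≤ x^p := le_self_pow₀ hx1 (by omega)
    have hxppos : (0:ℝ) < x^p := by positivity
    have key : M*x^p - (1/q)*(x^p*(x^(q-(p:ℝ)) * (r*Real.log x*C + A1))) ≤ -x := by
      have h1 : (1/q)*(x^p*(q*(|M|+1))) ≤ (1/q)*(x^p*(x^(q-(p:ℝ)) * (r*Real.log x*C + A1))) := by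
        apply mul_le_mul_of_nonneg_left _ (by positivity)
        exact mul_le_mul_of_nonneg_left hin (by positivity)
      have h2 : (1/q)*(x^p*(q*(|M|+1))) = x^p*(|M|+1) := by field_simp
      have h3 : M*x^p ≤ |M| *x^p := mul_le_mul_of_nonneg_right (le_abs_self M) hxppos.le
      nlinarith [h1, h2, h3, hxp]
    calc M*x^p - (1/q)*(x^q*(r*Real.log x*C + A1))
        = M*x^p - (1/q)*(x^p*(x^(q-(p:ℝ)) * (r*Real.log x*C + A1))) := by
          rw [hsplit x hx0]; ring
      _ ≤ -x := key
  set H₁ : ℝ := |M| * R1^p + (1/q)*(C*r*(R1^q*Real.log R1 + 1) + |A1| *R1^q) with hH₁def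
  have claimB : ∀ x : ℝ, 0 ≤ x → x ≤ R1 → M*x^p - (1/q)*(x^q*(r*Real.log x*C + A1)) ≤ H₁ := by
    intro x hx0 hxR
    have h1 : M*x^p ≤ |M| * R1^p := by
      have : x^p ≤ R1^p := pow_le_pow_left₀ hx0 hxR p
      calc M*x^p ≤ |M| *x^p := mul_le_mul_of_nonneg_right (le_abs_self M) (by positivity)
        _ ≤ |M| *R1^p := mul_le_mul_of_nonneg_left this (abs_nonneg M)
    have h2 : -(x^q*(r*Real.log x*C + A1)) ≤ C*r*(R1^q*Real.log R1 + 1) + |A1| *R1^q := by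
      have hb1 : x^q * |Real.log x| ≤ R1^q*Real.log R1 + 1 := xqlog_bd hq1 hR1 x hx0 hxR
      have hb2 : x^q ≤ R1^q := Real.rpow_le_rpow hx0 hxR (by linarith)
      have hxqnn : (0:ℝ) ≤ x^q := Real.rpow_nonneg hx0 q
      have : -(x^q*(r*Real.log x*C + A1)) ≤ x^q * (r*C*|Real.log x|) + x^q*|A1| := by
        have habs : -(r*Real.log x*C + A1) ≤ r*C*|Real.log x| + |A1| := by
          have hrc : (0:ℝ) ≤ r*C := mul_nonneg (by linarith) hC.le
          have h1' := mul_le_mul_of_nonneg_left (neg_le_abs (Real.log x)) hrc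
          have h2' := neg_le_abs A1
          nlinarith [h1', h2']
        nlinarith [habs, hxqnn]
      calc -(x^q*(r*Real.log x*C + A1)) ≤ x^q * (r*C*|Real.log x|) + x^q*|A1| := this
        _ = C*r*(x^q*|Real.log x|) + |A1| *(x^q) := by ring
        _ ≤ C*r*(R1^q*Real.log R1 + 1) + |A1| *R1^q := by
            apply add_le_add
            · exact mul_le_mul_of_nonneg_left hb1 (by positivity)
            · exact mul_le_mul_of_nonneg_left hb2 (abs_nonneg A1)
    have hq0 : (0:ℝ) < 1/q := by positivity
    calc M*x^p - (1/q)*(x^q*(r*Real.log x*C + A1))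
        = M*x^p + (1/q)*(-(x^q*(r*Real.log x*C + A1))) := by ring
      _ ≤ |M| *R1^p + (1/q)*(C*r*(R1^q*Real.log R1 + 1) + |A1| *R1^q) := by
          apply add_le_add h1
          exact mul_le_mul_of_nonneg_left h2 hq0.le
  refine ⟨max H₁ 0, le_max_right _ _, ?_, ?_⟩
  · intro x hx0
    rcases le_or_gt x R1 with h | h
    · exact le_trans (claimB x hx0 h) (le_max_left _ _)
    · have := claimA x h.le
      have : M*x^p - (1/q)*(x^q*(r*Real.log x*C + A1)) ≤ -x := this
      have hx1 : 1 ≤ x := le_trans hR1 h.le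
      calc M*x^p - (1/q)*(x^q*(r*Real.log x*C + A1)) ≤ -x := this
        _ ≤ 0 := by linarith
        _ ≤ max H₁ 0 := le_max_right _ _
  · intro V
    refine ⟨max (max R1 2) (|V|+2), le_trans (le_max_right _ _) (le_max_left _ _), ?_⟩
    intro x hx
    have h1 : R1 ≤ x := le_trans (le_trans (le_max_left _ _) (le_max_left _ _)) hx
    have h2 : |V|+2 ≤ x := le_trans (le_max_right _ _) hx
    calc M*x^p - (1/q)*(x^q*(r*Real.log x*C + A1)) ≤ -x := claimA x h1
      _ < V := by
        have := neg_abs_le V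
        linarith

/-- For all small positive σ, the log term is dominated by `(B/p) σ^p`. -/
lemma small_eps (p : ℕ) (hp : 1 ≤ p) {q : ℝ} (hpq : (p:ℝ) < q) {B : ℝ} (hB : 0 < B)
    (C r A1 : ℝ) :
    ∃ ε : ℝ, 0 < ε ∧ ε ≤ 1 ∧ ∀ σ : ℝ, 0 < σ → σ ≤ ε →
      (1/q)*(σ^q*(r*Real.log σ*C + A1)) < (1/(p:ℝ))*(B*σ^p) := by
  have hp0 : (0:ℝ) < (p:ℝ) := by exact_mod_cast hp
  have hq : 0 < q := lt_trans hp0 hpq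
  have ht := inner_tendsto0 (show (0:ℝ) < q - (p:ℝ) by linarith) r A1 C
  have hev : ∀ᶠ σ in nhdsWithin 0 (Set.Ioi 0),
      σ^(q-(p:ℝ)) * (r*Real.log σ*C + A1) < q*B/(p:ℝ) := by
    apply ht.eventually_lt_const
    positivity
  rw [eventually_nhdsWithin_iff] at hev
  rw [Metric.eventually_nhds_iff] at hev
  obtain ⟨δ, hδ, hδ'⟩ := hev
  refine ⟨min (δ/2) 1, by positivity, min_le_right _ _, ?_⟩
  intro σ hσ0 hσε
  have hσδ : dist σ 0 < δ := by
    rw [Real.dist_eq, sub_zero, abs_of_pos hσ0]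
    have := min_le_left (δ/2) 1
    linarith
  have hkey : σ^(q-(p:ℝ)) * (r*Real.log σ*C + A1) < q*B/(p:ℝ) := hδ' hσδ hσ0
  have hsplit : σ^q = σ^p * σ^(q-(p:ℝ)) := by
    rw [← Real.rpow_natCast σ p, ← Real.rpow_add hσ0]
    congr 1; ring
  have hσp : (0:ℝ) < σ^p := by positivity
  calc (1/q)*(σ^q*(r*Real.log σ*C + A1))
      = (σ^p/q) * (σ^(q-(p:ℝ)) * (r*Real.log σ*C + A1)) := by rw [hsplit]; ring
    _ < (σ^p/q) * (q*B/(p:ℝ)) := by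
        apply mul_lt_mul_of_pos_left hkey (by positivity)
    _ = (1/(p:ℝ))*(B*σ^p) := by field_simp

def Hfun (p : ℕ) (q r : ℝ) (S : ℕ → ℝ) (B C D : ℝ) (x y : ℝ) : ℝ :=
  (∑ k ∈ Finset.range p, ((p-1).choose k : ℝ) * S (k+1) * x^(k+1) * y^(p-1-k))
    + B * x^p - x^q * (r * Real.log x * C + D)

def Phi (p : ℕ) (q r : ℝ) (S : ℕ → ℝ) (B C D B' C' D' : ℝ) (x y : ℝ) : ℝ :=
  (1/(p:ℝ)) * ((∑ k ∈ Finset.range (p+1), (p.choose k : ℝ) * S k * x^k * y^(p-k))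
    + B * x^p + B' * y^p)
  - (1/q) * (x^q * (r * Real.log x * C + (D - C*r/q)) + y^q * (r * Real.log y * C' + (D' - C'*r/q)))

lemma Phi_symm (p : ℕ) (q r : ℝ) (S : ℕ → ℝ) (B C D B' C' D' : ℝ) (x y : ℝ) :
    Phi p q r S B C D B' C' D' x y = Phi p q r (fun j => S (p-j)) B' C' D' B C D y x := by
  have key : ∑ k ∈ Finset.range (p+1), (p.choose k : ℝ) * S (p-k) * y^k * x^(p-k)
      = ∑ k ∈ Finset.range (p+1), (p.choose k : ℝ) * S k * x^k * y^(p-k) := by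
    rw [← Finset.sum_range_reflect]
    apply Finset.sum_congr rfl
    intro j hj
    have hj' : j ≤ p := by simpa [Nat.lt_succ_iff] using hj
    have h1 : p + 1 - 1 - j = p - j := by omega
    have h2 : p - (p - j) = j := by omega
    rw [h1, h2, Nat.choose_symm hj']
    ring
  simp only [Phi, key]
  ring

lemma Phi_hasDerivAt (p : ℕ) (hp2 : 2 ≤ p) {q : ℝ} (hq : 0 < q) (r : ℝ)
    (S : ℕ → ℝ) (B C D B' C' D' : ℝ) (y : ℝ) {x : ℝ} (hx : 0 < x) :
    ∃ L, HasDerivAt (fun z => Phi p q r S B C D B' C' D' z y) L x ∧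
      x * L = Hfun p q r S B C D x y := by
  have hx0 : x ≠ 0 := hx.ne'
  have h1 : HasDerivAt (fun z : ℝ => ∑ k ∈ Finset.range (p+1), (p.choose k : ℝ) * S k * z^k * y^(p-k))
      (∑ k ∈ Finset.range (p+1), (p.choose k:ℝ) * S k * ((k:ℝ)*x^(k-1)) * y^(p-k)) x := by
    apply HasDerivAt.fun_sum
    intro k _
    exact ((hasDerivAt_pow k x).const_mul ((p.choose k:ℝ) * S k)).mul_const _
  have h2 : HasDerivAt (fun z : ℝ => B * z^p) (B * ((p:ℝ)*x^(p-1))) x :=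
    (hasDerivAt_pow p x).const_mul B
  have h3a : HasDerivAt (fun z : ℝ => r * Real.log z * C + (D - C*r/q)) (r * x⁻¹ * C) x :=
    (((Real.hasDerivAt_log hx0).const_mul r).mul_const C).add_const _
  have h3b : HasDerivAt (fun z : ℝ => z ^ q) (q * x^(q-1)) x :=
    Real.hasDerivAt_rpow_const (Or.inl hx0)
  have h3 : HasDerivAt (fun z : ℝ => z^q * (r*Real.log z*C + (D - C*r/q)))
      (q*x^(q-1)*(r*Real.log x*C + (D-C*r/q)) + x^q*(r*x⁻¹*C)) x := h3b.mul h3a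
  refine ⟨(1/(p:ℝ)) * ((∑ k ∈ Finset.range (p+1), (p.choose k:ℝ) * S k * ((k:ℝ)*x^(k-1)) * y^(p-k)) + B * ((p:ℝ)*x^(p-1)))
      - (1/q) * (q*x^(q-1)*(r*Real.log x*C + (D-C*r/q)) + x^q*(r*x⁻¹*C)), ?_, ?_⟩
  · have big := (((h1.add h2).add_const (B'*y^p)).const_mul (1/(p:ℝ))).sub
      ((h3.add_const (y^q * (r * Real.log y * C' + (D' - C'*r/q)))).const_mul (1/q))
    simp only [Phi]
    exact big
  · have eS : x * (∑ k ∈ Finset.range (p+1), (p.choose k:ℝ)*S k*((k:ℝ)*x^(k-1))*y^(p-k))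
        = (p:ℝ) * ∑ j ∈ Finset.range p, ((p-1).choose j : ℝ) * S (j+1) * x^(j+1) * y^(p-1-j) := by
      rw [Finset.mul_sum, Finset.sum_range_succ', Finset.mul_sum]
      simp only [Nat.cast_zero, zero_mul, mul_zero, add_zero]
      apply Finset.sum_congr rfl
      intro j hj
      have hj' : j < p := Finset.mem_range.mp hj
      have hch : (p:ℝ) * ((p-1).choose j : ℝ) = (p.choose (j+1) : ℝ) * ((j:ℝ)+1) := by
        have h := Nat.add_one_mul_choose_eq (p-1) j
        have hps : p - 1 + 1 = p := by omega
        rw [hps] at h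
        exact_mod_cast congrArg (Nat.cast (R := ℝ)) h
      have he1 : j + 1 - 1 = j := by omega
      have he2 : p - (j+1) = p - 1 - j := by omega
      rw [he1, he2]
      push_cast
      rw [pow_succ x j]
      linear_combination (-(S (j+1)) * (x^j*x) * y^(p-1-j)) * hch
    have exq : x * x^(q-1) = x^q := by
      rw [Real.rpow_sub hx, Real.rpow_one]; field_simp
    have exp' : x * x^(p-1) = x^p := by
      conv_rhs => rw [show p = (p-1)+1 by omega]
      rw [pow_succ]; ring
    have hp0 : (p:ℝ) ≠ 0 := by positivity
    have hq0 : q ≠ 0 := hq.ne'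
    simp only [Hfun]
    have expand : x * ((1/(p:ℝ)) * ((∑ k ∈ Finset.range (p+1), (p.choose k:ℝ) * S k * ((k:ℝ)*x^(k-1)) * y^(p-k)) + B * ((p:ℝ)*x^(p-1)))
        - (1/q) * ((q*x^(q-1)*(r*Real.log x*C + (D-C*r/q)) + x^q*(r*x⁻¹*C))))
        = (1/(p:ℝ)) * (x * (∑ k ∈ Finset.range (p+1), (p.choose k:ℝ) * S k * ((k:ℝ)*x^(k-1)) * y^(p-k)) + B * ((p:ℝ)*(x*x^(p-1))))
        - (1/q) * (q*(x*x^(q-1))*(r*Real.log x*C + (D-C*r/q)) + x^q*(r*(x*x⁻¹)*C)) := by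
      ring
    rw [expand, eS, exq, exp', mul_inv_cancel₀ hx0]
    field_simp
    ring

lemma Hfun_mono (p : ℕ) (hp2 : 2 ≤ p) {q r : ℝ} (hpq : (p:ℝ) < q) (hr : 1 ≤ r)
    (S : ℕ → ℝ) (hS : ∀ k, k ≤ p → 0 ≤ S k) {B C : ℝ} (hB : 0 < B) (hC : 0 < C) (D : ℝ)
    {x1 y1 x2 y2 : ℝ} (hx1 : 0 < x1) (hy1 : 0 < y1) (hx2 : 0 < x2) (hy2 : 0 < y2)
    (h1 : Hfun p q r S B C D x1 y1 = 0) (h2 : Hfun p q r S B C D x2 y2 = 0)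
    (hle : x1 ≤ x2) (hyx : y2 * x1 ≤ y1 * x2) : x2 ≤ x1 := by
  set l := x2/x1 with hldef
  set m := y2/y1 with hmdef
  have hl1 : 1 ≤ l := (one_le_div hx1).mpr hle
  have hl0 : 0 < l := by positivity
  have hm0 : 0 < m := by positivity
  have hml : m ≤ l := by
    rw [hmdef, hldef, div_le_div_iff₀ hy1 hx1]
    linarith [hyx]
  have hx2e : x2 = l * x1 := by rw [hldef, div_mul_cancel₀ x2 hx1.ne']
  have hy2e : y2 = m * y1 := by rw [hmdef, div_mul_cancel₀ y2 hy1.ne']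
  set T1 : ℝ := ∑ k ∈ Finset.range p, ((p-1).choose k : ℝ) * S (k+1) * x1^(k+1) * y1^(p-1-k) with hT1
  have hT1nn : 0 ≤ T1 := by
    apply Finset.sum_nonneg
    intro k hk
    have hkp : k < p := Finset.mem_range.mp hk
    have := hS (k+1) (by omega)
    positivity
  set X : ℝ := T1 + B * x1^p with hX
  have hXpos : 0 < X := by
    have : (0:ℝ) < B * x1^p := by positivity
    linarith
  have heq1 : x1^q * (r * Real.log x1 * C + D) = X := by
    have := h1
    simp only [Hfun] at this
    rw [hX, hT1]
    linarith [this]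
  have hpoly2 : ∑ k ∈ Finset.range p, ((p-1).choose k : ℝ) * S (k+1) * x2^(k+1) * y2^(p-1-k)
      ≤ l^p * T1 := by
    rw [hT1, Finset.mul_sum]
    apply Finset.sum_le_sum
    intro k hk
    have hkp : k < p := Finset.mem_range.mp hk
    rw [hx2e, hy2e, mul_pow, mul_pow]
    have hlm : l^(k+1) * m^(p-1-k) ≤ l^p := by
      calc l^(k+1) * m^(p-1-k) ≤ l^(k+1) * l^(p-1-k) := by
            apply mul_le_mul_of_nonneg_left (pow_le_pow_left₀ hm0.le hml _) (by positivity)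
        _ = l^p := by rw [← pow_add]; congr 1; omega
    have hrest : (0:ℝ) ≤ ((p-1).choose k : ℝ) * S (k+1) * (x1^(k+1) * y1^(p-1-k)) := by
      have := hS (k+1) (by omega); positivity
    calc ((p-1).choose k : ℝ) * S (k+1) * (l^(k+1) * x1^(k+1)) * (m^(p-1-k) * y1^(p-1-k))
        = (l^(k+1) * m^(p-1-k)) * (((p-1).choose k : ℝ) * S (k+1) * (x1^(k+1) * y1^(p-1-k))) := by ring
      _ ≤ l^p * (((p-1).choose k : ℝ) * S (k+1) * (x1^(k+1) * y1^(p-1-k))) :=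
          mul_le_mul_of_nonneg_right hlm hrest
      _ = l^p * (((p-1).choose k : ℝ) * S (k+1) * x1^(k+1) * y1^(p-1-k)) := by ring
  have hx2q : x2^q = l^q * x1^q := by
    rw [hx2e, Real.mul_rpow hl0.le hx1.le]
  have hlogx2 : Real.log x2 = Real.log l + Real.log x1 := by
    rw [hx2e, Real.log_mul hl0.ne' hx1.ne']
  have h2' : l^q * X + l^q * x1^q * (r * Real.log l * C) ≤ l^p * X := by
    have := h2
    simp only [Hfun] at this
    rw [hx2q, hlogx2] at this
    have hBx2 : B * x2^p = l^p * (B * x1^p) := by rw [hx2e, mul_pow]; ring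
    rw [hBx2] at this
    have hexp : l^q * x1^q * (r * (Real.log l + Real.log x1) * C + D)
        = l^q * X + l^q * x1^q * (r * Real.log l * C) := by
      rw [← heq1]; ring
    have hX2 : l^p * X = l^p * T1 + l^p * (B * x1^p) := by rw [hX]; ring
    linarith [hpoly2, this, hexp, hX2]
  have hlpq : l^(p:ℕ) ≤ l^q := by
    rw [← Real.rpow_natCast l p]
    exact Real.rpow_le_rpow_of_exponent_le hl1 hpq.le
  have ha2 : l^q * x1^q * (r * Real.log l * C) ≤ 0 := by
    linarith [h2', mul_le_mul_of_nonneg_right hlpq hXpos.le]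
  have hlog : Real.log l ≤ 0 := by
    by_contra hcon
    push_neg at hcon
    have hpos : (0:ℝ) < l^q * x1^q * (r * Real.log l * C) := by
      have h1' : (0:ℝ) < l^q := Real.rpow_pos_of_pos hl0 q
      have h2'' : (0:ℝ) < x1^q := Real.rpow_pos_of_pos hx1 q
      have h3' : (0:ℝ) < r := by linarith
      have := mul_pos (mul_pos h1' h2'') (mul_pos (mul_pos h3' hcon) hC)
      nlinarith [this]
    linarith
  have hlle1 : l ≤ 1 := by
    by_contra hcon
    push_neg at hcon
    have := Real.log_pos hcon
    linarith
  calc x2 = l * x1 := hx2e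
    _ ≤ 1 * x1 := mul_le_mul_of_nonneg_right hlle1 hx1.le
    _ = x1 := one_mul x1

lemma core_unique (p : ℕ) (hp2 : 2 ≤ p) {q r : ℝ} (hpq : (p:ℝ) < q) (hr : 1 ≤ r)
    (S : ℕ → ℝ) (hS : ∀ k, k ≤ p → 0 ≤ S k) {B C B' C' : ℝ} (hB : 0 < B) (hC : 0 < C)
    (hB' : 0 < B') (hC' : 0 < C') (D D' : ℝ)
    {s1 t1 s2 t2 : ℝ} (hs1 : 0 < s1) (ht1 : 0 < t1) (hs2 : 0 < s2) (ht2 : 0 < t2)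
    (hF1 : Hfun p q r S B C D s1 t1 = 0) (hG1 : Hfun p q r (fun j => S (p-j)) B' C' D' t1 s1 = 0)
    (hF2 : Hfun p q r S B C D s2 t2 = 0) (hG2 : Hfun p q r (fun j => S (p-j)) B' C' D' t2 s2 = 0) :
    s1 = s2 ∧ t1 = t2 := by
  have hS' : ∀ k, k ≤ p → 0 ≤ (fun j => S (p-j)) k := fun k _ => hS _ (by omega)
  rcases le_total (t2*s1) (t1*s2) with h | h
  · rcases le_total s1 s2 with hs | hs
    · have hs21 : s2 ≤ s1 := Hfun_mono p hp2 hpq hr S hS hB hC D hs1 ht1 hs2 ht2 hF1 hF2 hs h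
      have hseq : s1 = s2 := le_antisymm hs hs21
      have ht21 : t2 ≤ t1 := by
        have : t2 * s1 ≤ t1 * s1 := by rw [hseq] at h ⊢; exact h
        exact le_of_mul_le_mul_right this hs1
      have ht12 : t1 ≤ t2 := by
        apply Hfun_mono p hp2 hpq hr _ hS' hB' hC' D' ht2 hs2 ht1 hs1 hG2 hG1 ht21
        rw [hseq]; nlinarith [ht21, hs2]
      exact ⟨hseq, le_antisymm ht12 ht21⟩
    · have ht21 : t2 ≤ t1 := by
        have h' : t2 * s1 ≤ t1 * s1 := le_trans h (mul_le_mul_of_nonneg_left hs ht1.le)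
        exact le_of_mul_le_mul_right h' hs1
      have ht12 : t1 ≤ t2 := by
        apply Hfun_mono p hp2 hpq hr _ hS' hB' hC' D' ht2 hs2 ht1 hs1 hG2 hG1 ht21
        linarith [h]
      have hteq : t2 = t1 := le_antisymm ht21 ht12
      have hs12 : s1 ≤ s2 := by
        have h'' : t1 * s1 ≤ t1 * s2 := by rw [hteq] at h; exact h
        exact le_of_mul_le_mul_left h'' ht1
      exact ⟨le_antisymm hs12 hs, hteq.symm⟩
  · rcases le_total t1 t2 with ht | ht
    · have ht21 : t2 ≤ t1 := by
        apply Hfun_mono p hp2 hpq hr _ hS' hB' hC' D' ht1 hs1 ht2 hs2 hG1 hG2 ht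
        linarith [h]
      have hteq : t1 = t2 := le_antisymm ht ht21
      have hs21 : s2 ≤ s1 := by
        have : t1 * s2 ≤ t1 * s1 := by rw [hteq] at h ⊢; exact h
        exact le_of_mul_le_mul_left this ht1
      have hs12 : s1 ≤ s2 := by
        apply Hfun_mono p hp2 hpq hr S hS hB hC D hs2 ht2 hs1 ht1 hF2 hF1 hs21
        linarith [h]
      exact ⟨le_antisymm hs12 hs21, hteq⟩
    · have hs21 : s2 ≤ s1 := by
        have h' : t1 * s2 ≤ t1 * s1 := le_trans h (mul_le_mul_of_nonneg_right ht hs1.le)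
        exact le_of_mul_le_mul_left h' ht1
      have hs12 : s1 ≤ s2 := by
        apply Hfun_mono p hp2 hpq hr S hS hB hC D hs2 ht2 hs1 ht1 hF2 hF1 hs21
        linarith [h]
      have hseq : s1 = s2 := le_antisymm hs12 hs21
      have ht12 : t1 ≤ t2 := by
        have : t1 * s1 ≤ t2 * s1 := by rw [hseq] at h ⊢; exact h
        exact le_of_mul_le_mul_right this hs1
      exact ⟨hseq, le_antisymm ht12 ht⟩

lemma monomial_le {x y : ℝ} (hx : 0 ≤ x) (hy : 0 ≤ y) (k p : ℕ) (hk : k ≤ p) :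
    x^k * y^(p-k) ≤ x^p + y^p := by
  rcases le_total x y with h | h
  · have h1 : x^k * y^(p-k) ≤ y^k * y^(p-k) :=
      mul_le_mul_of_nonneg_right (pow_le_pow_left₀ hx h k) (by positivity)
    have h2 : y^k*y^(p-k) = y^p := by rw [← pow_add]; congr 1; omega
    nlinarith [pow_nonneg hx p]
  · have h1 : x^k * y^(p-k) ≤ x^k * x^(p-k) :=
      mul_le_mul_of_nonneg_left (pow_le_pow_left₀ hy h (p-k)) (by positivity)
    have h2 : x^k*x^(p-k) = x^p := by rw [← pow_add]; congr 1; omega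
    nlinarith [pow_nonneg hy p]

lemma Phi_zero_lt (p : ℕ) (hp2 : 2 ≤ p) {q r : ℝ} (hpq : (p:ℝ) < q) (hr : 1 ≤ r)
    (S : ℕ → ℝ) (hS : ∀ k, k ≤ p → 0 ≤ S k) {B : ℝ} (hB : 0 < B) (C D B' C' D' : ℝ) :
    ∃ ε, 0 < ε ∧ ε ≤ 1 ∧ ∀ σ, 0 < σ → σ ≤ ε → ∀ y, 0 ≤ y →
      Phi p q r S B C D B' C' D' 0 y < Phi p q r S B C D B' C' D' σ y := by
  obtain ⟨ε, hε0, hε1, hεp⟩ := small_eps p (by omega) hpq hB C r (D - C*r/q)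
  refine ⟨ε, hε0, hε1, ?_⟩
  intro σ hσ0 hσε y hy
  have hp0' : (0:ℝ) < (p:ℝ) := by exact_mod_cast (by omega : 0 < p)
  have hq : 0 < q := lt_trans hp0' hpq
  have hsum0 : ∑ k ∈ Finset.range (p+1), (p.choose k : ℝ) * S k * (0:ℝ)^k * y^(p-k)
      = S 0 * y^p := by
    rw [Finset.sum_range_succ']
    simp
  have hdiff : Phi p q r S B C D B' C' D' σ y - Phi p q r S B C D B' C' D' 0 y
      = (1/(p:ℝ))*((∑ k ∈ Finset.range (p+1), (p.choose k:ℝ)*S k*σ^k*y^(p-k)) - S 0 * y^p + B*σ^p)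
        - (1/q)*(σ^q*(r*Real.log σ*C + (D - C*r/q))) := by
    simp only [Phi, hsum0]
    rw [Real.zero_rpow hq.ne']
    rw [zero_pow (show p ≠ 0 by omega)]
    ring
  have hsumge : S 0 * y^p ≤ ∑ k ∈ Finset.range (p+1), (p.choose k:ℝ)*S k*σ^k*y^(p-k) := by
    rw [Finset.sum_range_succ']
    have hnn : 0 ≤ ∑ j ∈ Finset.range p, (p.choose (j+1):ℝ)*S (j+1)*σ^(j+1)*y^(p-(j+1)) := by
      apply Finset.sum_nonneg; intro k hk
      have hkp : k < p := Finset.mem_range.mp hk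
      have := hS (k+1) (by omega); positivity
    have h0term : (p.choose 0:ℝ)*S 0*σ^0*y^(p-0) = S 0 * y^p := by simp
    rw [h0term]
    linarith
  have hA : 0 ≤ (1/(p:ℝ))*((∑ k ∈ Finset.range (p+1), (p.choose k:ℝ)*S k*σ^k*y^(p-k)) - S 0*y^p) :=
    mul_nonneg (by positivity) (by linarith)
  have hexp : (1/(p:ℝ))*((∑ k ∈ Finset.range (p+1), (p.choose k:ℝ)*S k*σ^k*y^(p-k)) - S 0*y^p + B*σ^p)
      = (1/(p:ℝ))*((∑ k ∈ Finset.range (p+1), (p.choose k:ℝ)*S k*σ^k*y^(p-k)) - S 0*y^p)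
        + (1/(p:ℝ))*(B*σ^p) := by ring
  have hkey := hεp σ hσ0 hσε
  linarith [hdiff, hexp, hA, hkey]

lemma Phi_le_h (p : ℕ) (hp2 : 2 ≤ p) {q : ℝ} (hq : 0 < q) (r : ℝ)
    (S : ℕ → ℝ) (hS : ∀ k, k ≤ p → 0 ≤ S k) {B B' : ℝ} (hB : 0 < B) (hB' : 0 < B') (C D C' D' : ℝ)
    {x y : ℝ} (hx : 0 ≤ x) (hy : 0 ≤ y) :
    Phi p q r S B C D B' C' D' x y ≤
      (((1/(p:ℝ))*((∑ k ∈ Finset.range (p+1), (p.choose k:ℝ)*S k) + B + B'))*x^p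
        - (1/q)*(x^q*(r*Real.log x*C + (D - C*r/q))))
      + (((1/(p:ℝ))*((∑ k ∈ Finset.range (p+1), (p.choose k:ℝ)*S k) + B + B'))*y^p
        - (1/q)*(y^q*(r*Real.log y*C' + (D' - C'*r/q)))) := by
  have hp0' : (0:ℝ) < (p:ℝ) := by exact_mod_cast (by omega : 0 < p)
  have hkey : (∑ k ∈ Finset.range (p+1), (p.choose k:ℝ)*S k*x^k*y^(p-k)) + B*x^p + B'*y^p
      ≤ ((∑ k ∈ Finset.range (p+1), (p.choose k:ℝ)*S k) + B + B')*(x^p + y^p) := by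
    have h1 : ∀ k ∈ Finset.range (p+1),
        (p.choose k:ℝ)*S k*x^k*y^(p-k) ≤ ((p.choose k:ℝ)*S k)*(x^p+y^p) := by
      intro k hk
      have hk' : k ≤ p := by
        have := Finset.mem_range.mp hk; omega
      have hmon := monomial_le hx hy k p hk'
      have hc : 0 ≤ (p.choose k:ℝ)*S k := by
        have := hS k hk'; positivity
      calc (p.choose k:ℝ)*S k*x^k*y^(p-k) = ((p.choose k:ℝ)*S k)*(x^k*y^(p-k)) := by ring
        _ ≤ ((p.choose k:ℝ)*S k)*(x^p+y^p) := mul_le_mul_of_nonneg_left hmon hc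
    have h2 := Finset.sum_le_sum h1
    rw [← Finset.sum_mul] at h2
    have h3 : B*x^p ≤ B*(x^p+y^p) := by nlinarith [pow_nonneg hy p]
    have h4 : B'*y^p ≤ B'*(x^p+y^p) := by nlinarith [pow_nonneg hx p]
    nlinarith [h2, h3, h4]
  simp only [Phi]
  have hmul := mul_le_mul_of_nonneg_left hkey (by positivity : (0:ℝ) ≤ 1/(p:ℝ))
  have hring : (1/(p:ℝ))*(((∑ k ∈ Finset.range (p+1), (p.choose k:ℝ)*S k) + B + B')*(x^p + y^p))
      = ((1/(p:ℝ))*((∑ k ∈ Finset.range (p+1), (p.choose k:ℝ)*S k) + B + B'))*x^p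
        + ((1/(p:ℝ))*((∑ k ∈ Finset.range (p+1), (p.choose k:ℝ)*S k) + B + B'))*y^p := by ring
  linarith [hmul, hring]

lemma Phi_contOn (p : ℕ) {q : ℝ} (hq : 0 < q) (r : ℝ) (S : ℕ → ℝ) (B C D B' C' D' : ℝ) :
    ContinuousOn (fun z : ℝ×ℝ => Phi p q r S B C D B' C' D' z.1 z.2)
      (Set.Ici 0 ×ˢ Set.Ici 0) := by
  simp only [Phi]
  apply ContinuousOn.sub
  · apply Continuous.continuousOn
    apply continuous_const.mul
    apply Continuous.add
    apply Continuous.add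
    · apply continuous_finset_sum
      intro k _
      exact (continuous_const.mul (continuous_fst.pow k)).mul (continuous_snd.pow (p-k))
    · exact continuous_const.mul (continuous_fst.pow p)
    · exact continuous_const.mul (continuous_snd.pow p)
  · apply ContinuousOn.mul continuousOn_const
    apply ContinuousOn.add
    · exact (psi_contOn hq r (D - C*r/q) C).comp continuous_fst.continuousOn
        (fun z hz => hz.1)
    · exact (psi_contOn hq r (D' - C'*r/q) C').comp continuous_snd.continuousOn
        (fun z hz => hz.2)

lemma core_exists (p : ℕ) (hp2 : 2 ≤ p) {q r : ℝ} (hpq : (p:ℝ) < q) (hr : 1 ≤ r)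
    (S : ℕ → ℝ) (hS : ∀ k, k ≤ p → 0 ≤ S k) {B C B' C' : ℝ} (hB : 0 < B) (hC : 0 < C)
    (hB' : 0 < B') (hC' : 0 < C') (D D' : ℝ) :
    ∃ s t : ℝ, 0 < s ∧ 0 < t ∧ Hfun p q r S B C D s t = 0 ∧
      Hfun p q r (fun j => S (p-j)) B' C' D' t s = 0 := by
  have hp0' : (0:ℝ) < (p:ℝ) := by exact_mod_cast (by omega : 0 < p)
  have hq : 0 < q := lt_trans hp0' hpq
  set S' : ℕ → ℝ := fun j => S (p-j) with hS'def
  have hS' : ∀ k, k ≤ p → 0 ≤ S' k := fun k _ => hS _ (by omega)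
  set Φ : ℝ×ℝ → ℝ := fun z => Phi p q r S B C D B' C' D' z.1 z.2 with hPhiDef
  obtain ⟨e1, he10, he11, hsm1⟩ := Phi_zero_lt p hp2 hpq hr S hS hB C D B' C' D'
  obtain ⟨e2, he20, he21, hsm2⟩ := Phi_zero_lt p hp2 hpq hr S' hS' hB' C' D' B C D
  set ee : ℝ := min e1 e2 with heedef
  have hee0 : 0 < ee := lt_min he10 he20
  have hee1 : ee ≤ 1 := le_trans (min_le_left _ _) he11
  set M : ℝ := (1/(p:ℝ))*((∑ k ∈ Finset.range (p+1), (p.choose k:ℝ)*S k) + B + B') with hM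
  obtain ⟨H1, hH1nn, hH1, hRR1⟩ := hfn_props p (by omega) hpq hC hr M (D - C*r/q)
  obtain ⟨H2, hH2nn, hH2, hRR2⟩ := hfn_props p (by omega) hpq hC' hr M (D' - C'*r/q)
  set v : ℝ := Φ (ee, ee) with hv
  obtain ⟨R1, hR12, hR1⟩ := hRR1 (v - H2)
  obtain ⟨R2, hR22, hR2⟩ := hRR2 (v - H1)
  set R : ℝ := max R1 R2 with hR
  have hR2le : (2:ℝ) ≤ R := le_trans hR12 (le_max_left _ _)
  have heeR : ee ≤ R := by linarith
  have he1R : e1 ≤ R := by linarith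
  have he2R : e2 ≤ R := by linarith
  set K : Set (ℝ×ℝ) := Icc (0:ℝ) R ×ˢ Icc (0:ℝ) R with hK
  have hKc : IsCompact K := isCompact_Icc.prod isCompact_Icc
  have heeK : (ee, ee) ∈ K := ⟨⟨hee0.le, heeR⟩, ⟨hee0.le, heeR⟩⟩
  have hKsub : K ⊆ Set.Ici 0 ×ˢ Set.Ici 0 :=
    Set.prod_mono Set.Icc_subset_Ici_self Set.Icc_subset_Ici_self
  obtain ⟨z0, hz0K, hz0max⟩ := hKc.exists_isMaxOn ⟨(ee, ee), heeK⟩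
    ((Phi_contOn p hq r S B C D B' C' D').mono hKsub)
  obtain ⟨⟨hz01l, hz01r⟩, hz02l, hz02r⟩ := hz0K
  have hmax : ∀ w ∈ K, Φ w ≤ Φ z0 := fun w hw => hz0max hw
  have hvle : v ≤ Φ z0 := hmax (ee, ee) heeK
  -- the h-bound
  have hPhile : ∀ w : ℝ×ℝ, 0 ≤ w.1 → 0 ≤ w.2 → Φ w ≤
      (M*w.1^p - (1/q)*(w.1^q*(r*Real.log w.1*C + (D - C*r/q))))
      + (M*w.2^p - (1/q)*(w.2^q*(r*Real.log w.2*C' + (D' - C'*r/q)))) := by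
    intro w h1 h2
    exact Phi_le_h p hp2 hq r S hS hB hB' C D C' D' h1 h2
  have hs0ltR : z0.1 < R := by
    rcases lt_or_eq_of_le hz01r with h | h
    · exact h
    · exfalso
      have hb := hPhile z0 hz01l hz02l
      rw [h] at hb
      have hc1 : M*R^p - (1/q)*(R^q*(r*Real.log R*C + (D - C*r/q))) < v - H2 :=
        hR1 R (le_max_left _ _)
      have hc2 : M*z0.2^p - (1/q)*(z0.2^q*(r*Real.log z0.2*C' + (D' - C'*r/q))) ≤ H2 :=
        hH2 z0.2 hz02l
      linarith
  have ht0ltR : z0.2 < R := by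
    rcases lt_or_eq_of_le hz02r with h | h
    · exact h
    · exfalso
      have hb := hPhile z0 hz01l hz02l
      rw [h] at hb
      have hc1 : M*R^p - (1/q)*(R^q*(r*Real.log R*C' + (D' - C'*r/q))) < v - H1 :=
        hR2 R (le_max_right _ _)
      have hc2 : M*z0.1^p - (1/q)*(z0.1^q*(r*Real.log z0.1*C + (D - C*r/q))) ≤ H1 :=
        hH1 z0.1 hz01l
      linarith
  have hs0pos : 0 < z0.1 := by
    rcases lt_or_eq_of_le hz01l with h | h
    · exact h
    · exfalso
      have hlt := hsm1 e1 he10 le_rfl z0.2 hz02l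
      have hm := hmax (e1, z0.2) ⟨⟨he10.le, he1R⟩, ⟨hz02l, hz02r⟩⟩
      have hz0eq : Φ z0 = Phi p q r S B C D B' C' D' 0 z0.2 := by
        show Phi p q r S B C D B' C' D' z0.1 z0.2 = _
        rw [← h]
      rw [hz0eq] at hm
      exact absurd (lt_of_le_of_lt hm hlt) (lt_irrefl _)
  have ht0pos : 0 < z0.2 := by
    rcases lt_or_eq_of_le hz02l with h | h
    · exact h
    · exfalso
      have hlt := hsm2 e2 he20 le_rfl z0.1 hz01l
      have hz0eq : Φ z0 = Phi p q r S' B' C' D' B C D 0 z0.1 := by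
        show Phi p q r S B C D B' C' D' z0.1 z0.2 = _
        rw [Phi_symm p q r S B C D B' C' D' z0.1 z0.2, ← h]
      have hm0 : Φ (z0.1, e2) ≤ Φ z0 := hmax (z0.1, e2) ⟨⟨hz01l, hz01r⟩, ⟨he20.le, he2R⟩⟩
      rw [hz0eq] at hm0
      have hm : Phi p q r S' B' C' D' B C D e2 z0.1 ≤ Phi p q r S' B' C' D' B C D 0 z0.1 := by
        calc Phi p q r S' B' C' D' B C D e2 z0.1
            = Φ (z0.1, e2) := (Phi_symm p q r S B C D B' C' D' z0.1 e2).symm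
          _ ≤ Phi p q r S' B' C' D' B C D 0 z0.1 := hm0
      exact absurd (lt_of_le_of_lt hm hlt) (lt_irrefl _)
  have hKnhds : K ∈ nhds z0 := by
    have hopen : IsOpen (Ioo (0:ℝ) R ×ˢ Ioo (0:ℝ) R) := isOpen_Ioo.prod isOpen_Ioo
    apply Filter.mem_of_superset (hopen.mem_nhds ⟨⟨hs0pos, hs0ltR⟩, ⟨ht0pos, ht0ltR⟩⟩)
    exact Set.prod_mono Set.Ioo_subset_Icc_self Set.Ioo_subset_Icc_self
  have hloc : IsLocalMax Φ z0 := by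
    filter_upwards [hKnhds] with w hw
    exact hmax w hw
  obtain ⟨L1, hL1, hxL1⟩ := Phi_hasDerivAt p hp2 hq r S B C D B' C' D' z0.2 hs0pos
  have hloc1 : IsLocalMax (fun x => Phi p q r S B C D B' C' D' x z0.2) z0.1 := by
    have ht : Tendsto (fun x : ℝ => (x, z0.2)) (nhds z0.1) (nhds z0) := by
      rw [show z0 = (z0.1, z0.2) from rfl]
      exact (continuous_id.prodMk continuous_const).tendsto z0.1
    exact ht.eventually hloc
  have hL10 : L1 = 0 := by rw [← hL1.deriv]; exact hloc1.deriv_eq_zero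
  have hF0 : Hfun p q r S B C D z0.1 z0.2 = 0 := by rw [← hxL1, hL10, mul_zero]
  obtain ⟨L2, hL2, hxL2⟩ := Phi_hasDerivAt p hp2 hq r S' B' C' D' B C D z0.1 ht0pos
  have hloc2 : IsLocalMax (fun y => Phi p q r S' B' C' D' B C D y z0.1) z0.2 := by
    have ht : Tendsto (fun y : ℝ => (z0.1, y)) (nhds z0.2) (nhds z0) := by
      rw [show z0 = (z0.1, z0.2) from rfl]
      exact (continuous_const.prodMk continuous_id).tendsto z0.2
    have hev := ht.eventually hloc
    have hsymmpt : ∀ y : ℝ, Φ (z0.1, y) = Phi p q r S' B' C' D' B C D y z0.1 := by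
      intro y
      show Phi p q r S B C D B' C' D' z0.1 y = _
      exact Phi_symm p q r S B C D B' C' D' z0.1 y
    unfold IsLocalMax IsMaxFilter
    filter_upwards [hev] with y hy
    rw [← hsymmpt y, ← hsymmpt z0.2]
    exact hy
  have hL20 : L2 = 0 := by rw [← hL2.deriv]; exact hloc2.deriv_eq_zero
  have hG0 : Hfun p q r S' B' C' D' z0.2 z0.1 = 0 := by rw [← hxL2, hL20, mul_zero]
  exact ⟨z0.1, z0.2, hs0pos, ht0pos, hF0, hG0⟩

lemma log_rpow' {x : ℝ} (hx : 0 ≤ x) {r : ℝ} (hr : r ≠ 0) :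
    Real.log (x ^ r) = r * Real.log x := by
  rcases eq_or_lt_of_le hx with h | h
  · rw [← h, Real.zero_rpow hr, Real.log_zero, mul_zero]
  · exact Real.log_rpow h r

lemma rpow_q2 {x : ℝ} (hx : 0 < x) (q : ℝ) : x^(q-2) * x * x = x^q := by
  have h1 : x^(q-2) * x^(1:ℝ) = x^(q-2+1) := (Real.rpow_add hx _ _).symm
  rw [Real.rpow_one] at h1
  have h2 : x^(q-2+1) * x^(1:ℝ) = x^(q-2+1+1) := (Real.rpow_add hx _ _).symm
  rw [Real.rpow_one] at h2
  rw [h1, h2, show q-2+1+1 = q by ring]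

lemma Hfun_congr (p : ℕ) (q r : ℝ) {S1 S2 : ℕ → ℝ}
    (hS : ∀ j, 1 ≤ j → j ≤ p → S1 j = S2 j) (B C D x y : ℝ) :
    Hfun p q r S1 B C D x y = Hfun p q r S2 B C D x y := by
  unfold Hfun
  congr 1
  congr 1
  apply Finset.sum_congr rfl
  intro k hk
  have hkp : k < p := Finset.mem_range.mp hk
  rw [hS (k+1) (by omega) (by omega)]

section PW

variable (u : ℤ → ℝ) (s t : ℝ)

lemma pos_w (hs : 0 < s) (ht : 0 < t) :
    pos (fun n => s * pos u n + t * neg u n) = fun n => s * pos u n := by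
  funext n
  rcases le_total (u n) 0 with h | h
  · have h1 : pos u n = 0 := max_eq_right h
    have h2 : neg u n = u n := min_eq_left h
    show max (s * pos u n + t * neg u n) 0 = s * pos u n
    rw [h1, h2, mul_zero, zero_add]
    rw [max_eq_right (by nlinarith)]
  · have h1 : pos u n = u n := max_eq_left h
    have h2 : neg u n = 0 := min_eq_right h
    show max (s * pos u n + t * neg u n) 0 = s * pos u n
    rw [h1, h2, mul_zero, add_zero]
    rw [max_eq_left (by nlinarith)]

lemma neg_w (hs : 0 < s) (ht : 0 < t) :
    neg (fun n => s * pos u n + t * neg u n) = fun n => t * neg u n := by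
  funext n
  rcases le_total (u n) 0 with h | h
  · have h1 : pos u n = 0 := max_eq_right h
    have h2 : neg u n = u n := min_eq_left h
    show min (s * pos u n + t * neg u n) 0 = t * neg u n
    rw [h1, h2, mul_zero, zero_add, min_eq_left (by nlinarith)]
  · have h1 : pos u n = u n := max_eq_left h
    have h2 : neg u n = 0 := min_eq_right h
    show min (s * pos u n + t * neg u n) 0 = t * neg u n
    rw [h1, h2, mul_zero, add_zero, min_eq_right (by nlinarith)]

lemma pos_flip : pos (fun n => -(u n)) = fun n => -(neg u n) := by
  funext n
  show max (-(u n)) 0 = -(min (u n) 0)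
  rcases le_total (u n) 0 with h | h
  · rw [max_eq_left (by linarith), min_eq_left h]
  · rw [max_eq_right (by linarith), min_eq_right h, neg_zero]

lemma neg_flip : neg (fun n => -(u n)) = fun n => -(pos u n) := by
  funext n
  show min (-(u n)) 0 = -(max (u n) 0)
  rcases le_total (u n) 0 with h | h
  · rw [min_eq_right (by linarith), max_eq_right h, neg_zero]
  · rw [min_eq_left (by linarith), max_eq_left h]

end PW

lemma pr_flip (a b c : ℤ → ℝ) (p : ℕ) (hpe : Even p) (hp2 : 2 ≤ p) (q r : ℝ) (w v : ℤ → ℝ) :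
    pr a b c p q r (fun n => -(w n)) (fun n => -(v n)) = pr a b c p q r w v := by
  have hpe2 : Even (p-2) := by
    rw [Nat.even_sub hp2]
    simp [hpe]
  unfold pr
  congr 1
  · apply tsum_congr
    intro n
    have h1 : dlt (fun n => -(w n)) n = -(dlt w n) := by simp only [dlt]; ring
    have h2 : dlt (fun n => -(v n)) n = -(dlt v n) := by simp only [dlt]; ring
    rw [h1, h2, abs_neg, abs_neg, Even.pow_abs hpe2, Even.pow_abs hpe2]
    ring
  · apply tsum_congr
    intro n
    rw [abs_neg]
    ring

section MainPW

lemma w_pt1 {p : ℕ} (hp2 : 2 ≤ p) (hpe : Even p)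
    (a b : ℤ → ℝ) (u : ℤ → ℝ) {s t : ℝ} (hs : 0 < s) (ht : 0 < t) : ∀ n : ℤ,
    a n * |dlt (fun m => s * pos u m + t * neg u m) n| ^ (p - 2)
        * dlt (fun m => s * pos u m + t * neg u m) n
        * dlt (pos (fun m => s * pos u m + t * neg u m)) n
      + b n * |(fun m => s * pos u m + t * neg u m) n| ^ (p - 2)
        * (fun m => s * pos u m + t * neg u m) n
        * pos (fun m => s * pos u m + t * neg u m) n
    = (∑ k ∈ Finset.range p, s^(k+1) * t^(p-1-k) *
        (((p-1).choose k : ℝ) * (a n * dlt (pos u) n^(k+1) * dlt (neg u) n^(p-1-k))))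
      + s^p * (b n * pos u n ^ p) := by
  intro n
  have hpe2 : Even (p-2) := by
    rw [Nat.even_sub hp2]; simp [hpe]
  rw [pos_w u s t hs ht]
  have hdw : dlt (fun m => s * pos u m + t * neg u m) n
      = s * dlt (pos u) n + t * dlt (neg u) n := by
    simp only [dlt]; ring
  have hdp : dlt (fun m => s * pos u m) n = s * dlt (pos u) n := by
    simp only [dlt]; ring
  have hA : a n * |dlt (fun m => s * pos u m + t * neg u m) n| ^ (p - 2)
        * dlt (fun m => s * pos u m + t * neg u m) n
        * dlt (fun m => s * pos u m) n
      = ∑ k ∈ Finset.range p, s^(k+1) * t^(p-1-k) *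
        (((p-1).choose k : ℝ) * (a n * dlt (pos u) n^(k+1) * dlt (neg u) n^(p-1-k))) := by
    rw [Even.pow_abs hpe2, hdw, hdp]
    have hpow : (s * dlt (pos u) n + t * dlt (neg u) n)^(p-2)
        * (s * dlt (pos u) n + t * dlt (neg u) n)
        = (s * dlt (pos u) n + t * dlt (neg u) n)^(p-1) := by
      rw [← pow_succ]; congr 1; omega
    calc a n * (s * dlt (pos u) n + t * dlt (neg u) n)^(p-2)
          * (s * dlt (pos u) n + t * dlt (neg u) n) * (s * dlt (pos u) n)
        = a n * ((s * dlt (pos u) n + t * dlt (neg u) n)^(p-2)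
          * (s * dlt (pos u) n + t * dlt (neg u) n)) * (s * dlt (pos u) n) := by ring
      _ = a n * (s * dlt (pos u) n + t * dlt (neg u) n)^(p-1) * (s * dlt (pos u) n) := by
          rw [hpow]
      _ = ∑ k ∈ Finset.range p, s^(k+1) * t^(p-1-k) *
            (((p-1).choose k : ℝ) * (a n * dlt (pos u) n^(k+1) * dlt (neg u) n^(p-1-k))) := by
          rw [add_pow, show p-1+1 = p from by omega, Finset.mul_sum, Finset.sum_mul]
          apply Finset.sum_congr rfl
          intro k hk
          ring
  have hB : b n * |(fun m => s * pos u m + t * neg u m) n| ^ (p - 2)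
        * (fun m => s * pos u m + t * neg u m) n * (s * pos u n)
      = s^p * (b n * pos u n ^ p) := by
    rcases le_total (u n) 0 with h | h
    · have h1 : pos u n = 0 := max_eq_right h
      have hp0 : (0:ℝ)^p = 0 := zero_pow (by omega)
      rw [h1]
      simp [mul_zero, hp0]
    · have h2 : neg u n = 0 := min_eq_right h
      have hwn : (fun m => s * pos u m + t * neg u m) n = s * pos u n := by
        show s * pos u n + t * neg u n = _
        rw [h2]; ring
      rw [hwn, Even.pow_abs hpe2]
      have h3 : (s * pos u n)^(p-2) * (s * pos u n) * (s * pos u n) = (s * pos u n)^p := by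
        rw [← pow_succ, ← pow_succ]; congr 1; omega
      calc b n * (s * pos u n)^(p-2) * (s * pos u n) * (s * pos u n)
          = b n * ((s * pos u n)^(p-2) * (s * pos u n) * (s * pos u n)) := by ring
        _ = b n * (s * pos u n)^p := by rw [h3]
        _ = s^p * (b n * pos u n ^ p) := by rw [mul_pow]; ring
  rw [hA, hB]

lemma w_pt2 {q r : ℝ} (hq2 : 2 < q)
    (u : ℤ → ℝ) {s t : ℝ} (hs : 0 < s) (ht : 0 < t) (c : ℤ → ℝ) : ∀ n : ℤ,
    c n * |(fun m => s * pos u m + t * neg u m) n| ^ (q - 2)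
        * (fun m => s * pos u m + t * neg u m) n
        * pos (fun m => s * pos u m + t * neg u m) n
        * Real.log (|(fun m => s * pos u m + t * neg u m) n| ^ r)
    = s^q * (r * Real.log s * (c n * pos u n ^ q)
        + c n * pos u n ^ q * Real.log (pos u n ^ r)) := by
  intro n
  rw [pos_w u s t hs ht]
  rcases le_or_gt (u n) 0 with h | h
  · have h1 : pos u n = 0 := max_eq_right h
    have hq0 : (0:ℝ)^q = 0 := Real.zero_rpow (by linarith)
    simp [h1, hq0]
  · have h1 : pos u n = u n := max_eq_left h.le
    have hP : 0 < pos u n := by rw [h1]; exact h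
    have h2 : neg u n = 0 := min_eq_right h.le
    have hwn : (fun m => s * pos u m + t * neg u m) n = s * pos u n := by
      show s * pos u n + t * neg u n = _
      rw [h2]; ring
    have hx : 0 < s * pos u n := by positivity
    rw [hwn, abs_of_pos hx]
    have hq2' : (s * pos u n)^(q-2) * (s * pos u n) * (s * pos u n) = (s * pos u n)^q :=
      rpow_q2 hx q
    calc c n * (s * pos u n)^(q-2) * (s * pos u n) * (s * pos u n)
          * Real.log ((s * pos u n)^r)
        = c n * ((s * pos u n)^(q-2) * (s * pos u n) * (s * pos u n))
          * Real.log ((s * pos u n)^r) := by ring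
      _ = c n * (s * pos u n)^q * Real.log ((s * pos u n)^r) := by rw [hq2']
      _ = c n * (s^q * pos u n^q) * (r * (Real.log s + Real.log (pos u n))) := by
          rw [Real.mul_rpow hs.le hP.le, Real.log_rpow hx, Real.log_mul hs.ne' hP.ne']
      _ = s^q * (r * Real.log s * (c n * pos u n ^ q)
            + c n * pos u n ^ q * Real.log (pos u n ^ r)) := by
          rw [Real.log_rpow hP]
          ring

end MainPW

lemma pr_eq {p : ℕ} (hp2 : 2 ≤ p) (hpe : Even p) {q r : ℝ} (hq2 : 2 < q)
    (a b c : ℤ → ℝ) (u : ℤ → ℝ)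
    (hSXY : ∀ i j : ℕ, i + j = p →
      Summable (fun n : ℤ => a n * dlt (pos u) n ^ i * dlt (neg u) n ^ j))
    (hSbp : Summable (fun n : ℤ => b n * pos u n ^ p))
    (hScq : Summable (fun n : ℤ => c n * pos u n ^ q))
    (hScqlog : Summable (fun n : ℤ => c n * pos u n ^ q * Real.log (pos u n ^ r)))
    {s t : ℝ} (hs : 0 < s) (ht : 0 < t) :
    pr a b c p q r (fun n => s * pos u n + t * neg u n)
        (pos (fun n => s * pos u n + t * neg u n))
    = Hfun p q r (fun j => ∑' n : ℤ, a n * dlt (pos u) n ^ j * dlt (neg u) n ^ (p-j))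
        (∑' n : ℤ, b n * pos u n ^ p) (∑' n : ℤ, c n * pos u n ^ q)
        (∑' n : ℤ, c n * pos u n ^ q * Real.log (pos u n ^ r)) s t := by
  have hsum1 : ∀ k ∈ Finset.range p, Summable (fun n : ℤ => s^(k+1) * t^(p-1-k) *
      (((p-1).choose k : ℝ) * (a n * dlt (pos u) n^(k+1) * dlt (neg u) n^(p-1-k)))) := by
    intro k hk
    have hkp : k < p := Finset.mem_range.mp hk
    have h1 := hSXY (k+1) (p-1-k) (by omega)
    exact (h1.mul_left _).mul_left _
  unfold pr
  rw [tsum_congr (w_pt1 hp2 hpe a b u hs ht), tsum_congr (w_pt2 hq2 u hs ht c)]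
  rw [Summable.tsum_add (summable_sum hsum1) (hSbp.mul_left (s^p))]
  rw [Summable.tsum_finsetSum hsum1]
  rw [tsum_mul_left]
  rw [tsum_mul_left]
  rw [Summable.tsum_add (hScq.mul_left _) hScqlog]
  rw [tsum_mul_left]
  unfold Hfun
  have hsc : ∀ k ∈ Finset.range p,
      (∑' n : ℤ, s^(k+1) * t^(p-1-k) *
        (((p-1).choose k : ℝ) * (a n * dlt (pos u) n^(k+1) * dlt (neg u) n^(p-1-k))))
      = ((p-1).choose k : ℝ) *
          ((fun j => ∑' n : ℤ, a n * dlt (pos u) n ^ j * dlt (neg u) n ^ (p-j)) (k+1))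
          * s^(k+1) * t^(p-1-k) := by
    intro k hk
    have hkp : k < p := Finset.mem_range.mp hk
    rw [tsum_mul_left, tsum_mul_left]
    beta_reduce
    rw [show p - (k+1) = p - 1 - k from by omega]
    ring
  rw [Finset.sum_congr rfl hsc]
  ring
section Summab

variable {a b c : ℤ → ℝ} {p : ℕ} {q r : ℝ} {u : ℤ → ℝ}

lemma sum_parts (ha : ∀ n, 0 < a n) (hb : ∀ n, 0 < b n)
    (h : Summable (nsum a b p u)) :
    Summable (fun n : ℤ => a n * |dlt u n|^p) ∧ Summable (fun n : ℤ => b n * |u n|^p) := by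
  constructor
  · apply Summable.of_nonneg_of_le _ _ h
    · intro n; exact mul_nonneg (ha n).le (by positivity)
    · intro n
      unfold nsum
      nlinarith [mul_nonneg (hb n).le (pow_nonneg (abs_nonneg (u n)) p)]
  · apply Summable.of_nonneg_of_le _ _ h
    · intro n; exact mul_nonneg (hb n).le (by positivity)
    · intro n
      unfold nsum
      nlinarith [mul_nonneg (ha n).le (pow_nonneg (abs_nonneg (dlt u n)) p)]

lemma u_bdd (hb0 : 0 < (1:ℝ)) {b0 : ℝ} (hb00 : 0 < b0) (hbb : ∀ n, b0 ≤ b n)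
    (ha : ∀ n, 0 < a n) (hb : ∀ n, 0 < b n) (hp : p ≠ 0)
    (h : Summable (nsum a b p u)) :
    ∃ M : ℝ, 1 ≤ M ∧ ∀ n, |u n| ≤ M := by
  set T := ∑' n : ℤ, nsum a b p u n with hT
  have hnn : ∀ m : ℤ, 0 ≤ nsum a b p u m := by
    intro m
    unfold nsum
    have := (ha m).le; have := (hb m).le
    positivity
  have hle : ∀ n : ℤ, b0 * |u n|^p ≤ T := by
    intro n
    have h1 : b0*|u n|^p ≤ b n*|u n|^p :=
      mul_le_mul_of_nonneg_right (hbb n) (by positivity)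
    have h2 : b n*|u n|^p ≤ nsum a b p u n := by
      unfold nsum
      nlinarith [mul_nonneg (ha n).le (pow_nonneg (abs_nonneg (dlt u n)) p)]
    have h3 : nsum a b p u n ≤ T := Summable.le_tsum h n (fun j _ => hnn j)
    linarith
  refine ⟨max 1 (T/b0), le_max_left _ _, ?_⟩
  intro n
  by_contra hcon
  push_neg at hcon
  have h1 : 1 < |u n| := lt_of_le_of_lt (le_max_left _ _) hcon
  have h2 : |u n| ≤ |u n|^p := le_self_pow₀ h1.le hp
  have h3 : |u n|^p ≤ T/b0 := by
    rw [le_div_iff₀ hb00]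
    nlinarith [hle n]
  have h4 : T/b0 ≤ max 1 (T/b0) := le_max_right _ _
  linarith

lemma sum_XY (hpe : Even p) (ha : ∀ n, 0 < a n)
    (hSa : Summable (fun n : ℤ => a n * |dlt u n|^p)) :
    ∀ i j : ℕ, i + j = p →
      Summable (fun n : ℤ => a n * dlt (pos u) n ^ i * dlt (neg u) n ^ j) := by
  intro i j hij
  apply Summable.of_nonneg_of_le _ _ hSa
  · intro n
    have h1 := XYpow_nonneg u hpe i j hij n
    have h2 : a n * dlt (pos u) n ^ i * dlt (neg u) n ^ j
        = a n * (dlt (pos u) n ^ i * dlt (neg u) n ^ j) := by ring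
    rw [h2]
    exact mul_nonneg (ha n).le h1
  · intro n
    have h1 : dlt (pos u) n ^ i * dlt (neg u) n ^ j ≤ |dlt u n|^p :=
      le_trans (le_abs_self _) (abs_XYpow_le u i j hij n)
    have h2 := mul_le_mul_of_nonneg_left h1 (ha n).le
    nlinarith [h2]

lemma sum_b_pow (hpe : Even p) (hb : ∀ n, 0 < b n) {v : ℤ → ℝ}
    (hv : ∀ n, |v n| ≤ |u n|)
    (hSb : Summable (fun n : ℤ => b n * |u n|^p)) :
    Summable (fun n : ℤ => b n * v n ^ p) := by
  apply Summable.of_nonneg_of_le _ _ hSb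
  · intro n
    exact mul_nonneg (hb n).le (hpe.pow_nonneg _)
  · intro n
    apply mul_le_mul_of_nonneg_left _ (hb n).le
    rw [← Even.pow_abs hpe (v n)]
    exact pow_le_pow_left₀ (abs_nonneg _) (hv n) p

lemma sum_c_q (hcsum : Summable c) (hc : ∀ n, 0 < c n) {v : ℤ → ℝ}
    (h0 : ∀ n, 0 ≤ v n) {M : ℝ} (hM1 : 1 ≤ M) (hM : ∀ n, v n ≤ M)
    (hq : 1 ≤ q) : Summable (fun n : ℤ => c n * v n ^ q) := by
  apply Summable.of_nonneg_of_le _ _ (hcsum.mul_left (M^q))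
  · intro n
    exact mul_nonneg (hc n).le (Real.rpow_nonneg (h0 n) q)
  · intro n
    have h1 : v n ^ q ≤ M ^ q := Real.rpow_le_rpow (h0 n) (hM n) (by linarith)
    calc c n * v n ^ q ≤ c n * M^q := mul_le_mul_of_nonneg_left h1 (hc n).le
      _ = M^q * c n := by ring

lemma sum_c_qlog (hcsum : Summable c) (hc : ∀ n, 0 < c n) {v : ℤ → ℝ}
    (h0 : ∀ n, 0 ≤ v n) {M : ℝ} (hM1 : 1 ≤ M) (hM : ∀ n, v n ≤ M)
    (hq : 1 ≤ q) (hr : 1 ≤ r) :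
    Summable (fun n : ℤ => c n * v n ^ q * Real.log (v n ^ r)) := by
  apply Summable.of_abs
  apply Summable.of_nonneg_of_le (fun n => abs_nonneg _) _
    (hcsum.mul_left (r * (M^q * Real.log M + 1)))
  intro n
  rw [log_rpow' (h0 n) (by linarith : r ≠ 0)]
  rw [abs_mul, abs_mul, abs_mul]
  have e1 : |c n| = c n := abs_of_pos (hc n)
  have e2 : |v n ^ q| = v n ^ q := abs_of_nonneg (Real.rpow_nonneg (h0 n) q)
  have e3 : |r| = r := abs_of_pos (by linarith)
  rw [e1, e2, e3]
  have hbd : v n ^ q * |Real.log (v n)| ≤ M^q * Real.log M + 1 :=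
    xqlog_bd hq hM1 (v n) (h0 n) (hM n)
  have hcn := (hc n).le
  calc c n * v n ^ q * (r * |Real.log (v n)|)
      = (c n * r) * (v n ^ q * |Real.log (v n)|) := by ring
    _ ≤ (c n * r) * (M^q * Real.log M + 1) := by
        apply mul_le_mul_of_nonneg_left hbd
        exact mul_nonneg hcn (by linarith)
    _ = r * (M^q * Real.log M + 1) * c n := by ring

end Summab

lemma dlt_neg_fun (g : ℤ → ℝ) (n : ℤ) : dlt (fun m => -(g m)) n = -(dlt g n) := by
  simp only [dlt]; ring

lemma pr_neg_eq {p : ℕ} (hp2 : 2 ≤ p) (hpe : Even p) {q r : ℝ} (hq2 : 2 < q)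
    (a b c : ℤ → ℝ) (u : ℤ → ℝ)
    (hSXY : ∀ i j : ℕ, i + j = p →
      Summable (fun n : ℤ => a n * dlt (pos u) n ^ i * dlt (neg u) n ^ j))
    (hSbn : Summable (fun n : ℤ => b n * (-(neg u n)) ^ p))
    (hScn : Summable (fun n : ℤ => c n * (-(neg u n)) ^ q))
    (hScnlog : Summable (fun n : ℤ => c n * (-(neg u n)) ^ q * Real.log ((-(neg u n)) ^ r)))
    {s t : ℝ} (hs : 0 < s) (ht : 0 < t) :
    pr a b c p q r (fun n => s * pos u n + t * neg u n)
        (neg (fun n => s * pos u n + t * neg u n))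
    = Hfun p q r (fun j => ∑' n : ℤ, a n * dlt (pos u) n ^ (p-j) * dlt (neg u) n ^ (p-(p-j)))
        (∑' n : ℤ, b n * (-(neg u n)) ^ p) (∑' n : ℤ, c n * (-(neg u n)) ^ q)
        (∑' n : ℤ, c n * (-(neg u n)) ^ q * Real.log ((-(neg u n)) ^ r)) t s := by
  set u' : ℤ → ℝ := fun n => -(u n) with hu'
  have hposu' : ∀ n, pos u' n = -(neg u n) := fun n => congrFun (pos_flip u) n
  have hnegu' : ∀ n, neg u' n = -(pos u n) := fun n => congrFun (neg_flip u) n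
  have hdpos : ∀ n, dlt (pos u') n = -(dlt (neg u) n) := by
    intro n
    show pos u' (n+1) - pos u' n = _
    rw [hposu', hposu']
    show -(neg u (n+1)) - -(neg u n) = -(neg u (n+1) - neg u n)
    ring
  have hdneg : ∀ n, dlt (neg u') n = -(dlt (pos u) n) := by
    intro n
    show neg u' (n+1) - neg u' n = _
    rw [hnegu', hnegu']
    show -(pos u (n+1)) - -(pos u n) = -(pos u (n+1) - pos u n)
    ring
  have hneg1 : ((-1:ℝ))^p = 1 := hpe.neg_one_pow
  -- summability for u'
  have hSXY' : ∀ i j : ℕ, i + j = p →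
      Summable (fun n : ℤ => a n * dlt (pos u') n ^ i * dlt (neg u') n ^ j) := by
    intro i j hij
    apply (hSXY j i (by omega)).congr
    intro n
    rw [hdpos, hdneg, neg_pow, neg_pow]
    have h1 : (-1:ℝ)^i * (-1:ℝ)^j = 1 := by
      rw [← pow_add, hij, hneg1]
    linear_combination (-(a n * dlt (pos u) n ^ j * dlt (neg u) n ^ i)) * h1
  have hSbp' : Summable (fun n : ℤ => b n * pos u' n ^ p) := by
    apply hSbn.congr
    intro n
    rw [hposu']
  have hScq' : Summable (fun n : ℤ => c n * pos u' n ^ q) := by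
    apply hScn.congr
    intro n
    rw [hposu']
  have hScqlog' : Summable (fun n : ℤ => c n * pos u' n ^ q * Real.log (pos u' n ^ r)) := by
    apply hScnlog.congr
    intro n
    rw [hposu']
  have key := pr_eq hp2 hpe hq2 a b c u' hSXY' hSbp' hScq' hScqlog' ht hs
  -- identify the two pr's
  have hwfun : (fun n => t * pos u' n + s * neg u' n)
      = fun n => -((fun m => s * pos u m + t * neg u m) n) := by
    funext n
    rw [hposu', hnegu']
    show t * -(neg u n) + s * -(pos u n) = -(s * pos u n + t * neg u n)
    ring
  have hposw' : pos (fun n => t * pos u' n + s * neg u' n)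
      = fun n => -(neg (fun m => s * pos u m + t * neg u m) n) := by
    rw [hwfun]
    exact pos_flip (fun m => s * pos u m + t * neg u m)
  have hpr : pr a b c p q r (fun n => t * pos u' n + s * neg u' n)
        (pos (fun n => t * pos u' n + s * neg u' n))
      = pr a b c p q r (fun n => s * pos u n + t * neg u n)
        (neg (fun n => s * pos u n + t * neg u n)) := by
    rw [hposw', hwfun]
    exact pr_flip a b c p hpe hp2 q r _ _
  have hBeq : (∑' n : ℤ, b n * pos u' n ^ p) = ∑' n : ℤ, b n * (-(neg u n)) ^ p :=
    tsum_congr (fun n => by rw [hposu'])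
  have hCeq : (∑' n : ℤ, c n * pos u' n ^ q) = ∑' n : ℤ, c n * (-(neg u n)) ^ q :=
    tsum_congr (fun n => by rw [hposu'])
  have hDeq : (∑' n : ℤ, c n * pos u' n ^ q * Real.log (pos u' n ^ r))
      = ∑' n : ℤ, c n * (-(neg u n)) ^ q * Real.log ((-(neg u n)) ^ r) :=
    tsum_congr (fun n => by rw [hposu'])
  rw [hBeq, hCeq, hDeq] at key
  rw [← hpr, key]
  -- identify the Hfun's
  have hSeq : ∀ j, 1 ≤ j → j ≤ p →
      (fun j => ∑' n : ℤ, a n * dlt (pos u') n ^ j * dlt (neg u') n ^ (p-j)) j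
      = (fun j => ∑' n : ℤ, a n * dlt (pos u) n ^ (p-j) * dlt (neg u) n ^ (p-(p-j))) j := by
    intro j h1j hjp
    beta_reduce
    apply tsum_congr
    intro n
    rw [hdpos, hdneg, neg_pow, neg_pow, show p - (p - j) = j from by omega]
    have h1 : (-1:ℝ)^j * (-1:ℝ)^(p-j) = 1 := by
      rw [← pow_add, show j + (p-j) = p from by omega, hneg1]
    linear_combination (a n * dlt (neg u) n ^ j * dlt (pos u) n ^ (p-j)) * h1
  exact Hfun_congr p q r hSeq _ _ _ t s
lemma memD_w {p : ℕ} (hp2 : 2 ≤ p) {q r : ℝ} (hq1 : 1 ≤ q) (hr : 1 ≤ r)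
    {a b c : ℤ → ℝ} (ha : ∀ n, 0 < a n) (hb : ∀ n, 0 < b n) (hc : ∀ n, 0 < c n)
    (hcsum : Summable c) {u : ℤ → ℝ}
    (hu : memD a b c p q r u) {M : ℝ} (hM1 : 1 ≤ M) (hM : ∀ n, |u n| ≤ M)
    {s t : ℝ} (hs : 0 < s) (ht : 0 < t) :
    memD a b c p q r (fun n => s * pos u n + t * neg u n) := by
  have hwb : ∀ n : ℤ, |s * pos u n + t * neg u n| ≤ (s+t) * |u n| := by
    intro n
    calc |s * pos u n + t * neg u n| ≤ |s * pos u n| + |t * neg u n| := abs_add_le _ _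
      _ = s * |pos u n| + t * |neg u n| := by
          rw [abs_mul, abs_mul, abs_of_pos hs, abs_of_pos ht]
      _ ≤ s * |u n| + t * |u n| := by
          apply add_le_add
          · exact mul_le_mul_of_nonneg_left (pos_abs_le u n) hs.le
          · exact mul_le_mul_of_nonneg_left (neg_abs_le' u n) ht.le
      _ = (s+t) * |u n| := by ring
  constructor
  · -- memE
    apply Summable.of_nonneg_of_le _ _ (hu.1.mul_left ((s+t)^p))
    · intro n
      unfold nsum
      have := (ha n).le; have := (hb n).le
      positivity
    · intro n
      unfold nsum
      have hdw : dlt (fun m => s * pos u m + t * neg u m) n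
          = s * dlt (pos u) n + t * dlt (neg u) n := by
        simp only [dlt]; ring
      have h1 : |dlt (fun m => s * pos u m + t * neg u m) n| ≤ (s+t) * |dlt u n| := by
        rw [hdw]
        calc |s * dlt (pos u) n + t * dlt (neg u) n|
            ≤ |s * dlt (pos u) n| + |t * dlt (neg u) n| := abs_add_le _ _
          _ = s * |dlt (pos u) n| + t * |dlt (neg u) n| := by
              rw [abs_mul, abs_mul, abs_of_pos hs, abs_of_pos ht]
          _ ≤ s * |dlt u n| + t * |dlt u n| := by
              apply add_le_add
              · exact mul_le_mul_of_nonneg_left (abs_dlt_pos_le u n) hs.le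
              · exact mul_le_mul_of_nonneg_left (abs_dlt_neg_le u n) ht.le
          _ = (s+t) * |dlt u n| := by ring
      have h2 := hwb n
      have h1p : |dlt (fun m => s * pos u m + t * neg u m) n|^p ≤ (s+t)^p * |dlt u n|^p := by
        rw [← mul_pow]
        exact pow_le_pow_left₀ (abs_nonneg _) h1 p
      have h2p : |(fun m => s * pos u m + t * neg u m) n|^p ≤ (s+t)^p * |u n|^p := by
        rw [← mul_pow]
        exact pow_le_pow_left₀ (abs_nonneg _) h2 p
      have := (ha n).le
      have := (hb n).le
      calc a n * |dlt (fun m => s * pos u m + t * neg u m) n| ^ p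
            + b n * |(fun m => s * pos u m + t * neg u m) n| ^ p
          ≤ a n * ((s+t)^p * |dlt u n|^p) + b n * ((s+t)^p * |u n|^p) := by
            apply add_le_add
            · exact mul_le_mul_of_nonneg_left h1p (ha n).le
            · exact mul_le_mul_of_nonneg_left h2p (hb n).le
        _ = (s+t)^p * (a n * |dlt u n|^p + b n * |u n|^p) := by ring
  · -- logSummand
    have hM' : ∀ n : ℤ, |s * pos u n + t * neg u n| ≤ max 1 ((s+t)*M) := by
      intro n
      refine le_trans (hwb n) (le_trans ?_ (le_max_right _ _))
      exact mul_le_mul_of_nonneg_left (hM n) (by positivity)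
    have := sum_c_qlog hcsum hc
      (v := fun n => |s * pos u n + t * neg u n|) (fun n => abs_nonneg _)
      (le_max_left 1 ((s+t)*M)) hM' hq1 hr
    exact this.congr (fun n => rfl)

lemma posw_ne {u : ℤ → ℝ} (hup : pos u ≠ 0) {s t : ℝ} (hs : 0 < s) (ht : 0 < t) :
    pos (fun n => s * pos u n + t * neg u n) ≠ 0 := by
  rw [pos_w u s t hs ht]
  intro hcon
  apply hup
  funext n
  have h1 : s * pos u n = 0 := congrFun hcon n
  have : pos u n = 0 := by
    rcases mul_eq_zero.mp h1 with h | h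
    · exact absurd h hs.ne'
    · exact h
  simpa using this

lemma negw_ne {u : ℤ → ℝ} (hum : neg u ≠ 0) {s t : ℝ} (hs : 0 < s) (ht : 0 < t) :
    neg (fun n => s * pos u n + t * neg u n) ≠ 0 := by
  rw [neg_w u s t hs ht]
  intro hcon
  apply hum
  funext n
  have h1 : t * neg u n = 0 := congrFun hcon n
  have : neg u n = 0 := by
    rcases mul_eq_zero.mp h1 with h | h
    · exact absurd h ht.ne'
    · exact h
  simpa using this

lemma pos_exists {u : ℤ → ℝ} (hup : pos u ≠ 0) : ∃ n, 0 < pos u n := by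
  rw [Function.ne_iff] at hup
  obtain ⟨n, hn⟩ := hup
  exact ⟨n, lt_of_le_of_ne (pos_nonneg u n) (by simpa using (Ne.symm hn))⟩

lemma neg_exists {u : ℤ → ℝ} (hum : neg u ≠ 0) : ∃ n, 0 < -(neg u n) := by
  rw [Function.ne_iff] at hum
  obtain ⟨n, hn⟩ := hum
  refine ⟨n, ?_⟩
  have := neg_nonpos u n
  have hne : neg u n ≠ 0 := by simpa using hn
  have : neg u n < 0 := lt_of_le_of_ne this hne
  linarith

theorem stmt11 (p : ℕ) (hp2 : 2 ≤ p) (hpe : Even p)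
    (q r : ℝ) (hpq : (p : ℝ) < q) (hr : 1 ≤ r)
    (a b c : ℤ → ℝ)
    (ha : ∀ n, 0 < a n) (hb : ∀ n, 0 < b n) (hc : ∀ n, 0 < c n)
    (b0 : ℝ) (hb0 : 0 < b0) (hbb : ∀ n, b0 ≤ b n)
    (hbinf : Tendsto b cofinite atTop)
    (c0 : ℝ) (hc0 : 0 < c0) (hcc : ∀ n, c n ≤ c0)
    (hcsum : Summable c)
    (u : ℤ → ℝ) (hu : memD a b c p q r u)
    (hup : pos u ≠ 0) (hum : neg u ≠ 0) :
    ∃! st : ℝ × ℝ, 0 < st.1 ∧ 0 < st.2 ∧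
      (fun n => st.1 * pos u n + st.2 * neg u n) ∈ Mset a b c p q r := by
  have hq2 : 2 < q := by
    have h2p : (2:ℝ) ≤ (p:ℝ) := by exact_mod_cast hp2
    linarith
  have hq1 : 1 ≤ q := by linarith
  obtain ⟨M, hM1, hM⟩ := u_bdd one_pos hb0 hbb ha hb (by omega) hu.1
  obtain ⟨hSa, hSb⟩ := sum_parts ha hb hu.1
  have hSXY := sum_XY hpe ha hSa
  have hSbp : Summable (fun n : ℤ => b n * pos u n ^ p) :=
    sum_b_pow hpe hb (fun n => pos_abs_le u n) hSb
  have hSbn : Summable (fun n : ℤ => b n * (-(neg u n)) ^ p) :=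
    sum_b_pow hpe hb (fun n => by rw [abs_neg]; exact neg_abs_le' u n) hSb
  have hposM : ∀ n, pos u n ≤ M := fun n => le_trans (pos_le_abs u n) (hM n)
  have hnegnn : ∀ n, (0:ℝ) ≤ -(neg u n) := fun n => by linarith [neg_nonpos u n]
  have hnegM : ∀ n, -(neg u n) ≤ M := by
    intro n
    have h1 : |(-(neg u n))| ≤ |u n| := by rw [abs_neg]; exact neg_abs_le' u n
    have h2 := le_abs_self (-(neg u n))
    linarith [hM n]
  have hScq : Summable (fun n : ℤ => c n * pos u n ^ q) :=
    sum_c_q hcsum hc (pos_nonneg u) hM1 hposM hq1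
  have hScn : Summable (fun n : ℤ => c n * (-(neg u n)) ^ q) :=
    sum_c_q hcsum hc hnegnn hM1 hnegM hq1
  have hScqlog := sum_c_qlog hcsum hc (pos_nonneg u) hM1 hposM hq1 hr
  have hScnlog := sum_c_qlog hcsum hc hnegnn hM1 hnegM hq1 hr
  set Sf : ℕ → ℝ := fun j => ∑' n : ℤ, a n * dlt (pos u) n ^ j * dlt (neg u) n ^ (p-j)
    with hSfdef
  have hSnn : ∀ j, j ≤ p → 0 ≤ Sf j := by
    intro j hj
    apply tsum_nonneg
    intro n
    have h1 := XYpow_nonneg u hpe j (p-j) (by omega) n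
    calc (0:ℝ) ≤ a n * (dlt (pos u) n^j * dlt (neg u) n^(p-j)) :=
          mul_nonneg (ha n).le h1
      _ = a n * dlt (pos u) n^j * dlt (neg u) n^(p-j) := by ring
  obtain ⟨n₀, hn₀⟩ := pos_exists hup
  obtain ⟨n₁, hn₁⟩ := neg_exists hum
  have hBp : 0 < ∑' n : ℤ, b n * pos u n ^ p :=
    Summable.tsum_pos hSbp (fun n => mul_nonneg (hb n).le (hpe.pow_nonneg _)) n₀
      (mul_pos (hb n₀) (pow_pos hn₀ p))
  have hCp : 0 < ∑' n : ℤ, c n * pos u n ^ q :=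
    Summable.tsum_pos hScq (fun n => mul_nonneg (hc n).le (Real.rpow_nonneg (pos_nonneg u n) q)) n₀
      (mul_pos (hc n₀) (Real.rpow_pos_of_pos hn₀ q))
  have hBn : 0 < ∑' n : ℤ, b n * (-(neg u n)) ^ p :=
    Summable.tsum_pos hSbn (fun n => mul_nonneg (hb n).le (hpe.pow_nonneg _)) n₁
      (mul_pos (hb n₁) (pow_pos hn₁ p))
  have hCn : 0 < ∑' n : ℤ, c n * (-(neg u n)) ^ q :=
    Summable.tsum_pos hScn (fun n => mul_nonneg (hc n).le (Real.rpow_nonneg (hnegnn n) q)) n₁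
      (mul_pos (hc n₁) (Real.rpow_pos_of_pos hn₁ q))
  have hmem : ∀ s t : ℝ, 0 < s → 0 < t →
      ((fun n => s * pos u n + t * neg u n) ∈ Mset a b c p q r ↔
        (Hfun p q r Sf (∑' n : ℤ, b n * pos u n ^ p) (∑' n : ℤ, c n * pos u n ^ q)
            (∑' n : ℤ, c n * pos u n ^ q * Real.log (pos u n ^ r)) s t = 0 ∧
         Hfun p q r (fun j => Sf (p-j)) (∑' n : ℤ, b n * (-(neg u n)) ^ p)
            (∑' n : ℤ, c n * (-(neg u n)) ^ q)
            (∑' n : ℤ, c n * (-(neg u n)) ^ q * Real.log ((-(neg u n)) ^ r)) t s = 0)) := by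
    intro s t hs ht
    have e1 := pr_eq hp2 hpe hq2 a b c u hSXY hSbp hScq hScqlog hs ht
    have e2 := pr_neg_eq hp2 hpe hq2 a b c u hSXY hSbn hScn hScnlog hs ht
    constructor
    · intro hmm
      obtain ⟨hmemD, hpw, hnw, h4, h5⟩ := hmm
      constructor
      · rw [← e1]; exact h4
      · rw [← e2]; exact h5
    · rintro ⟨h4, h5⟩
      refine ⟨memD_w hp2 hq1 hr ha hb hc hcsum hu hM1 hM hs ht,
        posw_ne hup hs ht, negw_ne hum hs ht, ?_, ?_⟩
      · rw [e1]; exact h4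
      · rw [e2]; exact h5
  obtain ⟨s0, t0, hs0, ht0, hF0, hG0⟩ :=
    core_exists p hp2 hpq hr Sf hSnn hBp hCp hBn hCn
      (∑' n : ℤ, c n * pos u n ^ q * Real.log (pos u n ^ r))
      (∑' n : ℤ, c n * (-(neg u n)) ^ q * Real.log ((-(neg u n)) ^ r))
  refine ⟨(s0, t0), ⟨hs0, ht0, (hmem s0 t0 hs0 ht0).mpr ⟨hF0, hG0⟩⟩, ?_⟩
  rintro ⟨s1, t1⟩ ⟨hs1, ht1, hmem1⟩
  obtain ⟨hF1, hG1⟩ := (hmem s1 t1 hs1 ht1).mp hmem1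
  obtain ⟨h1, h2⟩ :=
    core_unique p hp2 hpq hr Sf hSnn hBp hCp hBn hCn
      (∑' n : ℤ, c n * pos u n ^ q * Real.log (pos u n ^ r))
      (∑' n : ℤ, c n * (-(neg u n)) ^ q * Real.log ((-(neg u n)) ^ r))
      hs1 ht1 hs0 ht0 hF1 hG1 hF0 hG0
  simp only [Prod.mk.injEq]
  exact ⟨h1, h2⟩

end DPLap
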